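/- arXiv:1710.09048 — 4 statements merged into one kernel-verified Lean document; each statement's English description precedes it below -/
import Mathlib

section
/- Let G be a finite connected simple graph with at least one edge. Then there exists a rotation system σ on G and a single face of σ (an orbit of the face-tracing permutation of σ) that contains at least one dart of every edge of G. Equivalently, G has an edge-outer orientable embedding, i.e., G has a reporter strand walk. -/
open SimpleGraph

/-- The permutation of darts reversing each dart. -/
def dartRev {V : Type*} (G : SimpleGraph V) : Equiv.Perm G.Dart where
  toFun d := d.symm
  invFun d := d.symm
  left_inv d := d.symm_symm
  right_inv d := d.symm_symm

/-- A rotation system on `G`: a permutation `σ` of the darts of `G` such that `σ d` has the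
same initial vertex as `d`, and `σ` acts as a single cycle on the darts at each vertex
(any two darts with the same initial vertex lie in a common cycle of `σ`). -/
def IsRotationSystem {V : Type*} (G : SimpleGraph V) (σ : Equiv.Perm G.Dart) : Prop :=
  (∀ d : G.Dart, (σ d).toProd.1 = d.toProd.1) ∧
    ∀ d d' : G.Dart, d.toProd.1 = d'.toProd.1 → σ.SameCycle d d'

/-- The face-tracing permutation `τ` of a rotation system `σ`: `τ d = σ (reverse of d)`. -/
def faceTracing {V : Type*} (G : SimpleGraph V) (σ : Equiv.Perm G.Dart) : Equiv.Perm G.Dart :=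
  (dartRev G).trans σ

namespace EOE

open Equiv Equiv.Perm

variable {α : Type*} [DecidableEq α] [Fintype α]

/-- `σ` fixes everything outside `A` and all elements of `A` lie on one `σ`-cycle. -/
def CycOn (σ : Equiv.Perm α) (A : Finset α) : Prop :=
  (∀ x, x ∉ A → σ x = x) ∧ ∀ x ∈ A, ∀ y ∈ A, σ.SameCycle x y

lemma CycOn.mapsTo {σ : Equiv.Perm α} {A : Finset α} (h : CycOn σ A) {x : α} (hx : x ∈ A) :
    σ x ∈ A := by
  by_contra hs
  have h1 : σ (σ x) = σ x := h.1 _ hs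
  have := σ.injective h1
  rw [this] at hs; exact hs hx

lemma zpow_apply_eq_self {σ : Equiv.Perm α} {x : α} (h : σ x = x) (n : ℤ) : (σ ^ n) x = x :=
  Equiv.Perm.zpow_apply_eq_self_of_apply_eq_self h n

lemma not_sameCycle_of_fixed {σ : Equiv.Perm α} {x y : α} (h : σ x = x) (hxy : x ≠ y) :
    ¬ σ.SameCycle x y := by
  rintro ⟨i, hi⟩
  rw [zpow_apply_eq_self h] at hi
  exact hxy hi

/-- If `π'` agrees with `π` on a `π`-closed set containing `x`, same-cycle transfers. -/
lemma sameCycle_of_agree {π π' : Equiv.Perm α} {S : Set α} (hcl : ∀ x ∈ S, π x ∈ S)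
    (hag : ∀ x ∈ S, π' x = π x) {x y : α} (hx : x ∈ S) (h : π.SameCycle x y) :
    π'.SameCycle x y := by
  obtain ⟨i, _, rfl⟩ := h.exists_pow_eq'
  have key : ∀ n : ℕ, (π ^ n) x ∈ S ∧ (π' ^ n) x = (π ^ n) x := by
    intro n
    induction n with
    | zero => exact ⟨hx, rfl⟩
    | succ k ih =>
        refine ⟨?_, ?_⟩
        · rw [pow_succ', Equiv.Perm.mul_apply]; exact hcl _ ih.1
        · rw [pow_succ', pow_succ', Equiv.Perm.mul_apply, Equiv.Perm.mul_apply, ih.2,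
            hag _ ih.1]
  exact ⟨(i : ℤ), by rw [zpow_natCast, (key i).2]⟩

private lemma swapMerge_aux {π : Equiv.Perm α} (a b : α) :
    ∀ i : ℕ, ((Equiv.swap a b) * π).SameCycle ((π ^ i) a) a ∨
      ((Equiv.swap a b) * π).SameCycle ((π ^ i) a) b := by
  set φ := (Equiv.swap a b) * π with hφ
  have hstep : ∀ w, π w ≠ a → π w ≠ b → φ w = π w := by
    intro w h1 h2
    rw [hφ, Equiv.Perm.mul_apply, Equiv.swap_apply_of_ne_of_ne h1 h2]
  intro i
  induction i with
  | zero => exact Or.inl (Equiv.Perm.SameCycle.refl _ _)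
  | succ k ih =>
      set x := (π ^ k) a with hxdef
      have hx1 : (π ^ (k+1)) a = π x := by rw [pow_succ', Equiv.Perm.mul_apply]
      by_cases h1 : π x = a
      · rw [hx1, h1]; exact Or.inl (Equiv.Perm.SameCycle.refl _ _)
      by_cases h2 : π x = b
      · rw [hx1, h2]; exact Or.inr (Equiv.Perm.SameCycle.refl _ _)
      · have hst : φ x = π x := hstep x h1 h2
        have hs : φ.SameCycle x ((π ^ (k+1)) a) := ⟨1, by simpa [hx1] using hst⟩
        rcases ih with h' | h'
        · exact Or.inl (hs.symm.trans h')
        · exact Or.inr (hs.symm.trans h')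

/-- Merging two cycles of `π` with a transposition. -/
lemma swapMerge {π : Equiv.Perm α} {a b : α} (h : ¬ π.SameCycle a b) {x : α}
    (hx : π.SameCycle a x ∨ π.SameCycle b x) :
    ((Equiv.swap a b) * π).SameCycle a x := by
  set φ := (Equiv.swap a b) * π with hφ
  have hstep : ∀ w, π w ≠ a → π w ≠ b → φ w = π w := by
    intro w h1 h2
    rw [hφ, Equiv.Perm.mul_apply, Equiv.swap_apply_of_ne_of_ne h1 h2]
  have claim0 : φ.SameCycle a b := by
    have sub : ∀ i : ℕ, φ.SameCycle a ((π ^ i) a) ∨ φ.SameCycle a b := by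
      intro i
      induction i with
      | zero => exact Or.inl (Equiv.Perm.SameCycle.refl _ _)
      | succ k ih =>
          rcases ih with h' | h'
          · set x' := (π ^ k) a with hxdef
            have hx1 : (π ^ (k+1)) a = π x' := by rw [pow_succ', Equiv.Perm.mul_apply]
            by_cases h2 : π x' = b
            · refine absurd ?_ h
              refine ⟨((k+1 : ℕ) : ℤ), ?_⟩
              rw [zpow_natCast, hx1, h2]
            by_cases h1 : π x' = a
            · have hb : φ x' = b := by
                rw [hφ, Equiv.Perm.mul_apply, h1, Equiv.swap_apply_left]
              exact Or.inr (h'.trans ⟨1, by simpa using hb⟩)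
            · have hst : φ x' = π x' := hstep x' h1 h2
              exact Or.inl (h'.trans ⟨1, by simpa [hx1] using hst⟩)
          · exact Or.inr h'
    obtain ⟨K, hK1, hK⟩ : ∃ K : ℕ, 1 ≤ K ∧ (π ^ K) a = a :=
      ⟨orderOf π, orderOf_pos π, by rw [pow_orderOf_eq_one]; rfl⟩
    rcases sub (K - 1) with h' | h'
    · set x' := (π ^ (K-1)) a with hxdef
      have h1 : π x' = a := by
        rw [hxdef, ← Equiv.Perm.mul_apply, ← pow_succ']
        rw [Nat.sub_add_cancel hK1]; exact hK
      have hb : φ x' = b := by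
        rw [hφ, Equiv.Perm.mul_apply, h1, Equiv.swap_apply_left]
      exact h'.trans ⟨1, by simpa using hb⟩
    · exact h'
  rcases hx with h' | h'
  · obtain ⟨i, _, rfl⟩ := h'.exists_pow_eq'
    rcases swapMerge_aux a b i with h'' | h''
    · exact h''.symm
    · exact (h''.trans claim0.symm).symm
  · obtain ⟨i, _, rfl⟩ := h'.exists_pow_eq'
    have hswap : Equiv.swap a b = Equiv.swap b a := Equiv.swap_comm a b
    have aux := swapMerge_aux (π := π) b a i
    rw [← hswap] at aux
    rcases aux with h'' | h''
    · exact claim0.trans h''.symm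
    · exact h''.symm

/-- Extending a cycle on `A` by a fresh element. -/
lemma cycOn_extend {σ : Equiv.Perm α} {A : Finset α} (h : CycOn σ A) {z c : α}
    (hz : z ∉ A) (hc : c ∈ A) : CycOn ((Equiv.swap z c) * σ) (insert z A) := by
  have hzc : z ≠ c := fun hh => hz (hh ▸ hc)
  have hnsc : ¬ σ.SameCycle z c := not_sameCycle_of_fixed (h.1 _ hz) hzc
  constructor
  · intro x hx
    simp only [Finset.mem_insert, not_or] at hx
    rw [Equiv.Perm.mul_apply, h.1 _ hx.2,
      Equiv.swap_apply_of_ne_of_ne hx.1 (fun hh => hx.2 (hh ▸ hc))]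
  · have key : ∀ x ∈ insert z A, ((Equiv.swap z c) * σ).SameCycle z x := by
      intro x hx
      rcases Finset.mem_insert.1 hx with rfl | hx'
      · exact Equiv.Perm.SameCycle.refl _ _
      · exact swapMerge hnsc (Or.inr (h.2 c hc x hx'))
    intro x hx y hy
    exact (key x hx).symm.trans (key y hy)

/-- Every finite set carries a permutation cycling exactly through it. -/
lemma exists_cycOn (A : Finset α) : ∃ σ : Equiv.Perm α, CycOn σ A := by
  induction A using Finset.induction_on with
  | empty => exact ⟨1, fun x _ => rfl, fun x hx => absurd hx (Finset.notMem_empty x)⟩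
  | insert _ _ hz =>
      rename_i z A _
      rcases A.eq_empty_or_nonempty with rfl | ⟨c, hc⟩
      · refine ⟨1, fun x _ => rfl, ?_⟩
        intro x hx y hy
        simp only [Finset.mem_insert, Finset.notMem_empty, or_false] at hx hy
        subst hx; subst hy; exact Equiv.Perm.SameCycle.refl _ _
      · rename_i ih
        obtain ⟨σ, hσ⟩ := ih
        exact ⟨_, cycOn_extend hσ hz hc⟩

lemma cycOn_conj {ρ : Equiv.Perm α} {B : Finset α} (h : CycOn ρ B) (π : Equiv.Perm α) :
    CycOn (π * ρ * π⁻¹) (B.image π) := by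
  constructor
  · intro x hx
    have : π⁻¹ x ∉ B := by
      intro hmem
      exact hx (Finset.mem_image.2 ⟨π⁻¹ x, hmem, by simp⟩)
    simp only [Equiv.Perm.mul_apply]
    rw [h.1 _ this]; simp
  · intro x hx y hy
    obtain ⟨x', hx', rfl⟩ := Finset.mem_image.1 hx
    obtain ⟨y', hy', rfl⟩ := Finset.mem_image.1 hy
    obtain ⟨i, hi⟩ := h.2 x' hx' y' hy'
    refine ⟨i, ?_⟩
    have : (π * ρ * π⁻¹) ^ i = π * ρ ^ i * π⁻¹ := by
      rw [← conj_zpow]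
    rw [this]
    simp [Equiv.Perm.mul_apply, hi]


lemma apply_mem_of_fix {m : Equiv.Perm α} {A : Finset α} (hfix : ∀ x, x ∉ A → m x = x)
    {y : α} (hy : y ∈ A) : m y ∈ A := by
  by_contra hs
  have h1 : m (m y) = m y := hfix _ hs
  have := m.injective h1
  rw [this] at hs; exact hs hy

lemma mem_of_moved {m : Equiv.Perm α} {A : Finset α} (hfix : ∀ x, x ∉ A → m x = x)
    {y : α} (hy : m y ≠ y) : y ∈ A := by
  by_contra hs; exact hy (hfix _ hs)

lemma fixed_swap_comm {π : Equiv.Perm α} {a b : α} (ha : π a = a) (hb : π b = b) :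
    π * Equiv.swap a b = Equiv.swap a b * π := by
  ext x
  simp only [Equiv.Perm.mul_apply]
  rcases eq_or_ne x a with rfl | hxa
  · rw [Equiv.swap_apply_left, hb, ha, Equiv.swap_apply_left]
  rcases eq_or_ne x b with rfl | hxb
  · rw [Equiv.swap_apply_right, ha, hb, Equiv.swap_apply_right]
  · rw [Equiv.swap_apply_of_ne_of_ne hxa hxb, Equiv.swap_apply_of_ne_of_ne]
    · intro hh; exact hxa (π.injective (hh.trans ha.symm))
    · intro hh; exact hxb (π.injective (hh.trans hb.symm))

/-- Main permutation lemma. -/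
theorem perm_main : ∀ (n : ℕ) (A : Finset α) (m : Equiv.Perm α), A.card ≤ n →
    (∀ x, x ∉ A → m x = x) →
    ((Equiv.Perm.sign m = 1 → ∃ σ, CycOn σ A ∧ CycOn (σ * m) A) ∧
     (Equiv.Perm.sign m = -1 → ∀ x₀, m x₀ ≠ x₀ →
        ∃ σ, CycOn σ A ∧ CycOn (σ * m) (A.erase x₀))) := by
  intro n
  induction n with
  | zero =>
      intro A m hcard hfix
      have hA : A = ∅ := Finset.card_eq_zero.1 (Nat.le_zero.1 hcard)
      subst hA
      have hm : m = 1 := Equiv.ext fun x => hfix x (Finset.notMem_empty x)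
      subst hm
      constructor
      · intro _
        exact ⟨1, ⟨fun x _ => rfl, fun x hx => absurd hx (Finset.notMem_empty x)⟩,
          ⟨fun x _ => rfl, fun x hx => absurd hx (Finset.notMem_empty x)⟩⟩
      · intro hs
        rw [Equiv.Perm.sign_one] at hs
        exact absurd hs (by decide)
  | succ n IH =>
      intro A m hcard hfix
      constructor
      -- ===================== FULL case =====================
      · intro hsgn
        by_cases hm1 : m = 1
        · obtain ⟨σ, hσ⟩ := exists_cycOn A
          exact ⟨σ, hσ, by rw [hm1, mul_one]; exact hσ⟩
        · -- some moved point exists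
          by_cases hlong : ∃ y, m y ≠ y ∧ m (m y) ≠ y
          · -- long-cycle case
            obtain ⟨y, hy1, hy2⟩ := hlong
            set z := m y with hz
            have hzy : z ≠ y := hy1
            have hyA : y ∈ A := mem_of_moved hfix hy1
            have hzA : z ∈ A := apply_mem_of_fix hfix hyA
            have hmz_ne : m z ≠ z := by
              intro hh
              exact hzy (m.injective (hh.trans hz))
            have hmz_ny : m z ≠ y := hy2
            set mh := m * Equiv.swap y z with hmh
            have hmh_z : mh z = z := by
              rw [hmh, Equiv.Perm.mul_apply, Equiv.swap_apply_right, ← hz]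
            have hmh_y : mh y = m z := by
              rw [hmh, Equiv.Perm.mul_apply, Equiv.swap_apply_left]
            have hmh_fix : ∀ x, x ∉ A.erase z → mh x = x := by
              intro x hx
              rcases eq_or_ne x z with rfl | hxz
              · exact hmh_z
              · have hxA : x ∉ A := by
                  intro hmem; exact hx (Finset.mem_erase.2 ⟨hxz, hmem⟩)
                have hxy : x ≠ y := fun hh => hxA (hh ▸ hyA)
                rw [hmh, Equiv.Perm.mul_apply, Equiv.swap_apply_of_ne_of_ne hxy hxz,
                  hfix x hxA]
            have hmh_sgn : Equiv.Perm.sign mh = -1 := by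
              rw [hmh, map_mul, hsgn, Equiv.Perm.sign_swap hzy.symm, one_mul]
            have hcard' : (A.erase z).card ≤ n := by
              rw [Finset.card_erase_of_mem hzA]
              omega
            have hmh_y' : mh y ≠ y := by rw [hmh_y]; exact hmz_ny
            obtain ⟨σh, hσh1, hσh2⟩ := (IH (A.erase z) mh hcard' hmh_fix).2 hmh_sgn y hmh_y'
            set ρ := σh * mh with hρ
            set B := (A.erase z).erase y with hB
            have hρfix : ∀ x, x ∉ B → ρ x = x := hσh2.1
            have hρy : ρ y = y := hρfix y (by simp [hB])
            have hρz : ρ z = z := hρfix z (by simp [hB])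
            -- the connector c
            have hcB : m z ∈ B := by
              have h1 : m z ∈ A := apply_mem_of_fix hfix hzA
              refine Finset.mem_erase.2 ⟨hmz_ny, Finset.mem_erase.2 ⟨hmz_ne, h1⟩⟩
            set c := m z with hc
            -- define σ
            have hzB' : z ∉ A.erase z := by simp
            have hcAz : c ∈ A.erase z := Finset.mem_erase.1 hcB |>.2
            have hins : insert z (A.erase z) = A := Finset.insert_erase hzA
            refine ⟨Equiv.swap z c * σh, by rw [← hins] at *; exact cycOn_extend hσh1 hzB' hcAz, ?_⟩
            -- now σ * m
            have hmeq : m = mh * Equiv.swap y z := by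
              rw [hmh, mul_assoc, Equiv.swap_mul_self, mul_one]
            have hcomm : ρ * Equiv.swap y z = Equiv.swap y z * ρ :=
              fixed_swap_comm hρy hρz
            have hφeq : Equiv.swap z c * σh * m = Equiv.swap z c * (Equiv.swap y z * ρ) := by
              rw [hmeq, ← mul_assoc, mul_assoc (Equiv.swap z c * σh) mh (Equiv.swap y z)]
              rw [show Equiv.swap z c * σh * (mh * Equiv.swap y z)
                    = Equiv.swap z c * (σh * mh * Equiv.swap y z) by group]
              rw [← hρ, hcomm]
            rw [hφeq]
            set π₁ := Equiv.swap y z * ρ with hπ₁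
            -- facts about π₁
            have hπ₁z : π₁ z = y := by
              rw [hπ₁, Equiv.Perm.mul_apply, hρz, Equiv.swap_apply_right]
            have hπ₁y : π₁ y = z := by
              rw [hπ₁, Equiv.Perm.mul_apply, hρy, Equiv.swap_apply_left]
            have hπ₁B : ∀ x ∈ B, π₁ x = ρ x := by
              intro x hx
              have h1 : ρ x ∈ B := hσh2.mapsTo hx
              have h2 : ρ x ≠ y := by intro hh; rw [hh] at h1; simp [hB] at h1
              have h3 : ρ x ≠ z := by intro hh; rw [hh] at h1; simp [hB] at h1
              rw [hπ₁, Equiv.Perm.mul_apply, Equiv.swap_apply_of_ne_of_ne h2 h3]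
            have hπ₁orb : ∀ i : ℕ, (π₁ ^ i) z = z ∨ (π₁ ^ i) z = y := by
              intro i
              induction i with
              | zero => exact Or.inl rfl
              | succ k ihk =>
                  rw [pow_succ', Equiv.Perm.mul_apply]
                  rcases ihk with h' | h'
                  · rw [h', hπ₁z]; exact Or.inr rfl
                  · rw [h', hπ₁y]; exact Or.inl rfl
            have hnsc : ¬ π₁.SameCycle z c := by
              intro hsc
              obtain ⟨j, _, hj⟩ := hsc.exists_pow_eq'
              rcases hπ₁orb j with h' | h'
              · rw [hj] at h'
                exact (Finset.mem_erase.1 ((Finset.mem_erase.1 hcB).2)).1 h'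
              · rw [hj] at h'
                exact (Finset.mem_erase.1 hcB).1 h' 
            constructor
            · -- fix off A
              intro x hx
              have hxB : x ∉ B := by
                intro hmem
                exact hx ((Finset.mem_erase.1 ((Finset.mem_erase.1 hmem).2)).2)
              have hxA' : ρ x = x := hρfix x hxB
              have hxy : x ≠ y := fun hh => hx (hh ▸ hyA)
              have hxz : x ≠ z := fun hh => hx (hh ▸ hzA)
              have hxc : x ≠ c := fun hh => hx (hh ▸ (Finset.mem_erase.1 hcAz).2)
              rw [Equiv.Perm.mul_apply, hπ₁, Equiv.Perm.mul_apply, hxA',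
                Equiv.swap_apply_of_ne_of_ne hxy hxz,
                Equiv.swap_apply_of_ne_of_ne hxz hxc]
            · -- single cycle on A
              have key : ∀ x ∈ A, (Equiv.swap z c * π₁).SameCycle z x := by
                intro x hx
                rcases eq_or_ne x z with rfl | hxz
                · exact Equiv.Perm.SameCycle.refl _ _
                rcases eq_or_ne x y with rfl | hxy
                · exact swapMerge hnsc (Or.inl ⟨1, by simpa using hπ₁z⟩)
                · have hxB : x ∈ B := Finset.mem_erase.2 ⟨hxy, Finset.mem_erase.2 ⟨hxz, hx⟩⟩
                  have hsc : ρ.SameCycle c x := hσh2.2 c hcB x hxB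
                  have hsc' : π₁.SameCycle c x := by
                    refine sameCycle_of_agree (S := (B : Set α)) ?_ ?_ hcB hsc
                    · intro w hw; exact hσh2.mapsTo hw
                    · intro w hw; exact hπ₁B w hw
                  exact swapMerge hnsc (Or.inr hsc')
              intro x hx x' hx'
              exact (key x hx).symm.trans (key x' hx')
          · -- involution case
            push_neg at hlong
            obtain ⟨u, hu⟩ : ∃ u, m u ≠ u := by
              by_contra hall
              push_neg at hall
              exact hm1 (Equiv.ext fun x => hall x)
            set w := m u with hw
            have hwu : w ≠ u := hu
            have hmw : m w = u := hlong u hu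
            have huA : u ∈ A := mem_of_moved hfix hu
            have hwA : w ∈ A := apply_mem_of_fix hfix huA
            -- a second transposition
            have hsecond : ∃ p, m p ≠ p ∧ p ≠ u ∧ p ≠ w := by
              by_contra hno
              push_neg at hno
              have hmeq : m = Equiv.swap u w := by
                ext x
                by_cases hx : m x = x
                · have hxu : x ≠ u := by
                    intro hh
                    rw [hh] at hx
                    exact hu hx
                  have hxw : x ≠ w := by
                    intro hh
                    rw [hh, hmw] at hx
                    exact hwu hx.symm
                  rw [hx, Equiv.swap_apply_of_ne_of_ne hxu hxw]
                · by_cases hxu : x = u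
                  · subst hxu; rw [← hw, Equiv.swap_apply_left]
                  · have hxw : x = w := hno x hx hxu
                    subst hxw; rw [hmw, Equiv.swap_apply_right]
              rw [hmeq, Equiv.Perm.sign_swap hwu.symm] at hsgn
              exact absurd hsgn (by decide)
            obtain ⟨p, hp, hpu, hpw⟩ := hsecond
            set q := m p with hq
            have hqp : q ≠ p := hp
            have hmq : m q = p := hlong p hp
            have hpA : p ∈ A := mem_of_moved hfix hp
            have hqA : q ∈ A := apply_mem_of_fix hfix hpA
            have hqu : q ≠ u := by
              intro hh
              apply hpw
              have : m q = m u := by rw [hh]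
              rw [hmq, ← hw] at this; exact this
            have hqw : q ≠ w := by
              intro hh
              apply hpu
              have : m q = m w := by rw [hh]
              rw [hmq, hmw] at this; exact this
            -- m₁ := m * swap p q
            set m₁ := m * Equiv.swap p q with hm₁
            have hm₁p : m₁ p = p := by
              rw [hm₁, Equiv.Perm.mul_apply, Equiv.swap_apply_left, hmq]
            have hm₁q : m₁ q = q := by
              rw [hm₁, Equiv.Perm.mul_apply, Equiv.swap_apply_right, ← hq]
            have hm₁u : m₁ u = w := by
              rw [hm₁, Equiv.Perm.mul_apply, Equiv.swap_apply_of_ne_of_ne hpu.symm hqu.symm,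
                ← hw]
            set B₂ := (A.erase p).erase q with hB₂
            have hm₁fix : ∀ x, x ∉ B₂ → m₁ x = x := by
              intro x hx
              rcases eq_or_ne x p with rfl | hxp
              · exact hm₁p
              rcases eq_or_ne x q with rfl | hxq
              · exact hm₁q
              · have hxA : x ∉ A := by
                  intro hmem
                  exact hx (Finset.mem_erase.2 ⟨hxq, Finset.mem_erase.2 ⟨hxp, hmem⟩⟩)
                rw [hm₁, Equiv.Perm.mul_apply, Equiv.swap_apply_of_ne_of_ne hxp hxq,
                  hfix x hxA]
            have hm₁sgn : Equiv.Perm.sign m₁ = -1 := by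
              rw [hm₁, map_mul, hsgn, Equiv.Perm.sign_swap hqp.symm, one_mul]
            have hcard' : B₂.card ≤ n := by
              rw [hB₂]
              have h1 : (A.erase p).card ≤ n := by
                rw [Finset.card_erase_of_mem hpA]; omega
              exact le_trans (Finset.card_erase_le) h1
            have hm₁u' : m₁ u ≠ u := by rw [hm₁u]; exact hwu
            obtain ⟨σh, hσh1, hσh2⟩ := (IH B₂ m₁ hcard' hm₁fix).2 hm₁sgn u hm₁u'
            set ρ := σh * m₁ with hρ
            set B₁ := B₂.erase u with hB₁
            have hρfix : ∀ x, x ∉ B₁ → ρ x = x := hσh2.1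
            have hρu : ρ u = u := hρfix u (by simp [hB₁])
            have hρp : ρ p = p := hρfix p (by simp [hB₁, hB₂])
            have hρq : ρ q = q := hρfix q (by simp [hB₁, hB₂])
            have huB₂ : u ∈ B₂ :=
              Finset.mem_erase.2 ⟨hqu.symm, Finset.mem_erase.2 ⟨hpu.symm, huA⟩⟩
            have hwB₁ : w ∈ B₁ := by
              refine Finset.mem_erase.2 ⟨hwu, Finset.mem_erase.2 ⟨hqw.symm,
                Finset.mem_erase.2 ⟨hpw.symm, hwA⟩⟩⟩
            -- σ := swap q w * swap p u * σh
            have hpB₂ : p ∉ B₂ := by simp [hB₂]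
            have hext1 : CycOn (Equiv.swap p u * σh) (insert p B₂) :=
              cycOn_extend hσh1 hpB₂ huB₂
            have hqins : q ∉ insert p B₂ := by
              simp [hB₂, hqp]
            have hwins : w ∈ insert p B₂ := by
              refine Finset.mem_insert_of_mem ?_
              exact Finset.mem_erase.2 ⟨hqw.symm, Finset.mem_erase.2 ⟨hpw.symm, hwA⟩⟩
            have hext2 : CycOn (Equiv.swap q w * (Equiv.swap p u * σh))
                (insert q (insert p B₂)) := cycOn_extend hext1 hqins hwins
            have hins2 : insert q (insert p B₂) = A := by
              rw [hB₂]
              ext x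
              simp only [Finset.mem_insert, Finset.mem_erase]
              constructor
              · rintro (rfl | rfl | ⟨_, _, hx⟩) <;> first | exact hqA | exact hpA | exact hx
              · intro hx
                rcases eq_or_ne x q with rfl | hxq
                · exact Or.inl rfl
                rcases eq_or_ne x p with rfl | hxp
                · exact Or.inr (Or.inl rfl)
                · exact Or.inr (Or.inr ⟨hxq, hxp, hx⟩)
            refine ⟨Equiv.swap q w * (Equiv.swap p u * σh), by rw [← hins2]; exact hext2, ?_⟩
            -- σ * m
            have hmeq : m = m₁ * Equiv.swap p q := by
              rw [hm₁, mul_assoc, Equiv.swap_mul_self, mul_one]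
            have hcomm : ρ * Equiv.swap p q = Equiv.swap p q * ρ := fixed_swap_comm hρp hρq
            have hφeq : Equiv.swap q w * (Equiv.swap p u * σh) * m
                = Equiv.swap q w * (Equiv.swap p u * (Equiv.swap p q * ρ)) := by
              rw [hmeq]
              have : Equiv.swap q w * (Equiv.swap p u * σh) * (m₁ * Equiv.swap p q)
                  = Equiv.swap q w * (Equiv.swap p u * ((σh * m₁) * Equiv.swap p q)) := by group
              rw [this, ← hρ, hcomm]
            rw [hφeq]
            set π₁ := Equiv.swap p q * ρ with hπ₁
            set π₂ := Equiv.swap p u * π₁ with hπ₂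
            -- π₁, π₂ facts
            have hπ₁p : π₁ p = q := by rw [hπ₁, Equiv.Perm.mul_apply, hρp, Equiv.swap_apply_left]
            have hπ₁q : π₁ q = p := by rw [hπ₁, Equiv.Perm.mul_apply, hρq, Equiv.swap_apply_right]
            have hπ₁u : π₁ u = u := by
              rw [hπ₁, Equiv.Perm.mul_apply, hρu, Equiv.swap_apply_of_ne_of_ne hpu.symm hqu.symm]
            have hπ₁B : ∀ x ∈ B₁, π₁ x = ρ x := by
              intro x hx
              have h1 : ρ x ∈ B₁ := hσh2.mapsTo hx
              have h2 : ρ x ≠ p := by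
                intro hh; rw [hh] at h1; simp [hB₁, hB₂] at h1
              have h3 : ρ x ≠ q := by
                intro hh; rw [hh] at h1; simp [hB₁, hB₂] at h1
              rw [hπ₁, Equiv.Perm.mul_apply, Equiv.swap_apply_of_ne_of_ne h2 h3]
            have hπ₂u : π₂ u = p := by
              rw [hπ₂, Equiv.Perm.mul_apply, hπ₁u, Equiv.swap_apply_right]
            have hπ₂p : π₂ p = q := by
              rw [hπ₂, Equiv.Perm.mul_apply, hπ₁p,
                Equiv.swap_apply_of_ne_of_ne hqp hqu]
            have hπ₂q : π₂ q = u := by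
              rw [hπ₂, Equiv.Perm.mul_apply, hπ₁q, Equiv.swap_apply_left]
            have hπ₂B : ∀ x ∈ B₁, π₂ x = ρ x := by
              intro x hx
              have h1 : ρ x ∈ B₁ := hσh2.mapsTo hx
              have h2 : ρ x ≠ p := by
                intro hh; rw [hh] at h1; simp [hB₁, hB₂] at h1
              have h4 : ρ x ≠ u := by
                intro hh; rw [hh] at h1; simp [hB₁] at h1
              rw [hπ₂, Equiv.Perm.mul_apply, hπ₁B x hx,
                Equiv.swap_apply_of_ne_of_ne h2 h4]
            -- orbit of q under π₂ is {p,q,u}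
            have hπ₂orb : ∀ i : ℕ, (π₂ ^ i) q = q ∨ (π₂ ^ i) q = u ∨ (π₂ ^ i) q = p := by
              intro i
              induction i with
              | zero => exact Or.inl rfl
              | succ k ihk =>
                  rw [pow_succ', Equiv.Perm.mul_apply]
                  rcases ihk with h' | h' | h'
                  · rw [h', hπ₂q]; exact Or.inr (Or.inl rfl)
                  · rw [h', hπ₂u]; exact Or.inr (Or.inr rfl)
                  · rw [h', hπ₂p]; exact Or.inl rfl
            have hnsc : ¬ π₂.SameCycle q w := by
              intro hsc
              obtain ⟨j, _, hj⟩ := hsc.exists_pow_eq'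
              rcases hπ₂orb j with h' | h' | h' <;> rw [hj] at h'
              · exact hqw.symm h'
              · exact hwu h'
              · exact hpw (h'.symm)
            constructor
            · -- fix off A
              intro x hx
              have hxB : x ∉ B₁ := by
                intro hmem
                have := (Finset.mem_erase.1 ((Finset.mem_erase.1
                  ((Finset.mem_erase.1 hmem).2)).2)).2
                exact hx this
              have hxρ : ρ x = x := hρfix x hxB
              have hxp : x ≠ p := fun hh => hx (hh ▸ hpA)
              have hxq : x ≠ q := fun hh => hx (hh ▸ hqA)
              have hxu : x ≠ u := fun hh => hx (hh ▸ huA)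
              have hxw : x ≠ w := fun hh => hx (hh ▸ hwA)
              rw [Equiv.Perm.mul_apply, hπ₂, Equiv.Perm.mul_apply, hπ₁,
                Equiv.Perm.mul_apply, hxρ,
                Equiv.swap_apply_of_ne_of_ne hxp hxq,
                Equiv.swap_apply_of_ne_of_ne hxp hxu,
                Equiv.swap_apply_of_ne_of_ne hxq hxw]
            · -- single cycle on A
              have key : ∀ x ∈ A, (Equiv.swap q w * π₂).SameCycle q x := by
                intro x hx
                rcases eq_or_ne x q with rfl | hxq
                · exact Equiv.Perm.SameCycle.refl _ _
                rcases eq_or_ne x u with rfl | hxu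
                · exact swapMerge hnsc (Or.inl ⟨1, by simpa using hπ₂q⟩)
                rcases eq_or_ne x p with rfl | hxp
                · refine swapMerge hnsc (Or.inl ?_)
                  refine Equiv.Perm.SameCycle.trans ⟨1, by simpa using hπ₂q⟩ ⟨1, by simpa using hπ₂u⟩
                · have hxB : x ∈ B₁ := by
                    refine Finset.mem_erase.2 ⟨hxu, Finset.mem_erase.2 ⟨hxq,
                      Finset.mem_erase.2 ⟨hxp, hx⟩⟩⟩
                  have hsc : ρ.SameCycle w x := hσh2.2 w hwB₁ x hxB
                  have hsc' : π₂.SameCycle w x := by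
                    refine sameCycle_of_agree (S := (B₁ : Set α)) ?_ ?_ hwB₁ hsc
                    · intro v hv; exact hσh2.mapsTo hv
                    · intro v hv; exact hπ₂B v hv
                  exact swapMerge hnsc (Or.inr hsc')
              intro x hx x' hx'
              exact (key x hx).symm.trans (key x' hx')
      -- ===================== SAC case =====================
      · intro hsgn x₀ hx₀
        set z := m x₀ with hz
        have hzx : z ≠ x₀ := hx₀
        have hx₀A : x₀ ∈ A := mem_of_moved hfix hx₀
        have hzA : z ∈ A := apply_mem_of_fix hfix hx₀A
        set mh := m * Equiv.swap x₀ z with hmh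
        have hmh_z : mh z = z := by
          rw [hmh, Equiv.Perm.mul_apply, Equiv.swap_apply_right, ← hz]
        have hmh_fix : ∀ x, x ∉ A.erase z → mh x = x := by
          intro x hx
          rcases eq_or_ne x z with rfl | hxz
          · exact hmh_z
          · have hxA : x ∉ A := by
              intro hmem; exact hx (Finset.mem_erase.2 ⟨hxz, hmem⟩)
            have hxx₀ : x ≠ x₀ := fun hh => hxA (hh ▸ hx₀A)
            rw [hmh, Equiv.Perm.mul_apply, Equiv.swap_apply_of_ne_of_ne hxx₀ hxz, hfix x hxA]
        have hmh_sgn : Equiv.Perm.sign mh = 1 := by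
          rw [hmh, map_mul, hsgn, Equiv.Perm.sign_swap hzx.symm]
          decide
        have hcard' : (A.erase z).card ≤ n := by
          rw [Finset.card_erase_of_mem hzA]; omega
        obtain ⟨σh, hσh1, hσh2⟩ := (IH (A.erase z) mh hcard' hmh_fix).1 hmh_sgn
        have hx₀Az : x₀ ∈ A.erase z := Finset.mem_erase.2 ⟨hzx.symm, hx₀A⟩
        have hzAz : z ∉ A.erase z := by simp
        have hins : insert z (A.erase z) = A := Finset.insert_erase hzA
        refine ⟨Equiv.swap z x₀ * σh, by rw [← hins]; exact cycOn_extend hσh1 hzAz hx₀Az, ?_⟩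
        -- σ * m is a conjugate of σh * mh
        have hmeq : m = mh * Equiv.swap x₀ z := by
          rw [hmh, mul_assoc, Equiv.swap_mul_self, mul_one]
        have hswapeq : Equiv.swap z x₀ = Equiv.swap x₀ z := Equiv.swap_comm z x₀
        have hconj : Equiv.swap z x₀ * σh * m
            = Equiv.swap x₀ z * (σh * mh) * (Equiv.swap x₀ z)⁻¹ := by
          rw [hmeq, hswapeq]
          have : (Equiv.swap x₀ z)⁻¹ = Equiv.swap x₀ z := by
            rw [Equiv.swap_inv]
          rw [this]; group
        rw [hconj]
        have himg : (A.erase z).image (Equiv.swap x₀ z) = A.erase x₀ := by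
          ext x
          simp only [Finset.mem_image, Finset.mem_erase]
          constructor
          · rintro ⟨y, ⟨hyz, hyA⟩, rfl⟩
            rcases eq_or_ne y x₀ with rfl | hyx₀
            · rw [Equiv.swap_apply_left]
              exact ⟨hzx, hzA⟩
            · rw [Equiv.swap_apply_of_ne_of_ne hyx₀ hyz]
              exact ⟨hyx₀, hyA⟩
          · rintro ⟨hxx₀, hxA⟩
            rcases eq_or_ne x z with rfl | hxz
            · exact ⟨x₀, ⟨hzx.symm, hx₀A⟩, Equiv.swap_apply_left _ _⟩
            · exact ⟨x, ⟨hxz, hxA⟩, Equiv.swap_apply_of_ne_of_ne hxx₀ hxz⟩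
        rw [← himg]
        exact cycOn_conj hσh2 _

open Classical in
/-- Gluing two injections along a decidable predicate into a permutation. -/
lemma exists_piecewise (P : α → Prop) (f g : α → α)
    (hf : ∀ x y, P x → P y → f x = f y → x = y) (hfP : ∀ x, P x → P (f x))
    (hg : ∀ x y, ¬P x → ¬P y → g x = g y → x = y) (hgP : ∀ x, ¬P x → ¬P (g x)) :
    ∃ π : Equiv.Perm α, (∀ x, P x → π x = f x) ∧ (∀ x, ¬P x → π x = g x) := by
  classical
  set F : α → α := fun x => if P x then f x else g x with hF
  have hinj : Function.Injective F := by
    intro x y hxy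
    by_cases hx : P x <;> by_cases hy : P y <;>
      simp only [hF, hx, hy, if_pos, if_neg, if_true, if_false] at hxy
    · exact hf x y hx hy hxy
    · exact absurd (hxy ▸ hfP x hx) (hgP y hy)
    · exact absurd (hxy.symm ▸ hfP y hy) (hgP x hx)
    · exact hg x y hx hy hxy
  have hbij : Function.Bijective F := Finite.injective_iff_bijective.1 hinj
  refine ⟨Equiv.ofBijective F hbij, ?_, ?_⟩
  · intro x hx; simp [Equiv.ofBijective, hF, hx]
  · intro x hx; simp [Equiv.ofBijective, hF, hx]

section Ret

variable (π : Equiv.Perm α) (P : α → Prop)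

open Classical in
/-- First-return time of `π` to `P`, starting at `x` (junk value if no return). -/
noncomputable def retTime (x : α) : ℕ :=
  if h : ∃ k : ℕ, 0 < k ∧ P ((π ^ k) x) then Nat.find h else 0

lemma ret_exists {x : α} (hx : P x) : ∃ k : ℕ, 0 < k ∧ P ((π ^ k) x) :=
  ⟨orderOf π, orderOf_pos π, by rw [pow_orderOf_eq_one]; simpa using hx⟩

open Classical in
lemma retTime_spec {x : α} (hx : P x) :
    0 < retTime π P x ∧ P ((π ^ retTime π P x) x) ∧
      ∀ j, 0 < j → j < retTime π P x → ¬ P ((π ^ j) x) := by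
  classical
  have h := ret_exists π P hx
  rw [retTime, dif_pos h]
  refine ⟨(Nat.find_spec h).1, (Nat.find_spec h).2, ?_⟩
  intro j hj hjlt hPj
  exact absurd (Nat.find_le ⟨hj, hPj⟩) (not_le.2 hjlt)

/-- The first return map. -/
noncomputable def firstRet (x : α) : α := (π ^ retTime π P x) x

lemma firstRet_mem {x : α} (hx : P x) : P (firstRet π P x) := (retTime_spec π P hx).2.1

lemma firstRet_injOn {x y : α} (hx : P x) (hy : P y)
    (hxy : firstRet π P x = firstRet π P y) : x = y := by
  classical
  obtain ⟨hxpos, hxmem, hxmin⟩ := retTime_spec π P hx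
  obtain ⟨hypos, hymem, hymin⟩ := retTime_spec π P hy
  set a := retTime π P x
  set b := retTime π P y
  rcases le_total a b with hab | hab
  · -- x = π^(b-a) y
    have hkey : x = (π ^ (b - a)) y := by
      have h1 : (π ^ a) x = (π ^ b) y := hxy
      have h2 : (π ^ a) ((π ^ (b - a)) y) = (π ^ b) y := by
        rw [← Equiv.Perm.mul_apply, ← pow_add]
        congr 2
        omega
      exact (π ^ a).injective (h1.trans h2.symm)
    rcases Nat.eq_or_lt_of_le hab with heq | hlt
    · have : b - a = 0 := by omega
      rw [this] at hkey; simpa using hkey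
    · exfalso
      have h0 : 0 < b - a := by omega
      have h1 : b - a < b := by omega
      exact hymin _ h0 h1 (by rw [← hkey]; exact hx)
  · have hkey : y = (π ^ (a - b)) x := by
      have h1 : (π ^ a) x = (π ^ b) y := hxy
      have h2 : (π ^ b) ((π ^ (a - b)) x) = (π ^ a) x := by
        rw [← Equiv.Perm.mul_apply, ← pow_add]
        congr 2
        omega
      exact (π ^ b).injective (h2.trans h1).symm
    rcases Nat.eq_or_lt_of_le hab with heq | hlt
    · have : a - b = 0 := by omega
      rw [this] at hkey; simpa using hkey.symm
    · exfalso
      have h0 : 0 < a - b := by omega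
      have h1 : a - b < a := by omega
      exact hxmin _ h0 h1 (by rw [← hkey]; exact hy)

end Ret

/-- The sign of a permutation cycling on `A` and fixing its complement. -/
lemma cycOn_sign {π : Equiv.Perm α} {A : Finset α} (h : CycOn π A) (hA : A.Nonempty) :
    Equiv.Perm.sign π = (-1 : ℤˣ) ^ (A.card - 1) := by
  classical
  rcases Nat.lt_or_ge A.card 2 with hcard | hcard
  · -- A is a singleton, π = 1
    have hc1 : A.card = 1 := le_antisymm (by omega) (Finset.card_pos.2 hA)
    obtain ⟨a, ha⟩ := Finset.card_eq_one.1 hc1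
    have hπ1 : π = 1 := by
      ext x
      by_cases hx : x ∈ A
      · rw [ha, Finset.mem_singleton] at hx
        subst hx
        have := h.mapsTo (x := x) (by rw [ha]; exact Finset.mem_singleton_self x)
        rw [ha, Finset.mem_singleton] at this
        simpa using this
      · simpa using h.1 x hx
    rw [hπ1, hc1]
    simp
  · have hnofix : ∀ x ∈ A, π x ≠ x := by
      intro x hx hfx
      obtain ⟨y, hy, hxy⟩ := Finset.exists_mem_ne (show 1 < A.card by omega) x
      exact not_sameCycle_of_fixed hfx (Ne.symm hxy) (h.2 x hx y hy)
    have h₁ : ∀ x, x ∈ A ↔ π x ∈ A := by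
      intro x
      constructor
      · exact fun hx => h.mapsTo hx
      · intro hπx
        by_contra hx
        rw [h.1 x hx] at hπx
        exact hx hπx
    set πs := π.subtypePerm (fun x => (h₁ x).symm) with hπs
    have hpow : ∀ (n : ℕ) (x : {x // x ∈ A}), ((πs ^ n) x : α) = (π ^ n) (x : α) := by
      intro n
      induction n with
      | zero => intro x; rfl
      | succ k ih =>
          intro x
          rw [pow_succ, pow_succ, Equiv.Perm.mul_apply, Equiv.Perm.mul_apply, ih (πs x)]
          rfl
    have hcyc : πs.IsCycle := by
      obtain ⟨a, ha⟩ := hA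
      refine ⟨⟨a, ha⟩, ?_, ?_⟩
      · intro hfix
        exact hnofix a ha (congrArg Subtype.val hfix)
      · intro y _
        have hsc : π.SameCycle a (y : α) := h.2 a ha (y : α) y.2
        obtain ⟨n, _, hn⟩ := hsc.exists_pow_eq'
        exact ⟨(n : ℤ), by rw [zpow_natCast]; exact Subtype.ext (by rw [hpow]; exact hn)⟩
    have hsupp : πs.support = Finset.univ := by
      ext x
      simp only [Equiv.Perm.mem_support, Finset.mem_univ, iff_true]
      intro hfix
      exact hnofix (x : α) x.2 (congrArg Subtype.val hfix)
    have h₂ : ∀ x, π x ≠ x → x ∈ A := by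
      intro x hx
      by_contra hmem
      exact hx (h.1 x hmem)
    have hss := Equiv.Perm.sign_subtypePerm π (fun x => (h₁ x).symm) h₂
    rw [← hss]
    have hfin : Equiv.Perm.sign πs = (-1 : ℤˣ) ^ (A.card - 1) := by
      rw [hcyc.sign, hsupp, Finset.card_univ, Fintype.card_coe,
        show A.card = (A.card - 1) + 1 by omega, pow_succ]
      simp
    rw [← hfin]
    congr!


section Graph
variable {V : Type*} [Fintype V] {G : SimpleGraph V}

lemma faceTracing_apply (σ : Equiv.Perm G.Dart) (d : G.Dart) :
    faceTracing G σ d = σ d.symm := rfl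

lemma faceTracing_inv_apply (σ : Equiv.Perm G.Dart) (d : G.Dart) :
    (faceTracing G σ)⁻¹ d = (σ⁻¹ d).symm := rfl

lemma dart_symm_fst (d : G.Dart) : d.symm.toProd.1 = d.toProd.2 := rfl
lemma dart_symm_snd (d : G.Dart) : d.symm.toProd.2 = d.toProd.1 := rfl

/-- The surgery lemma: re-choosing the rotation at a vertex `v` that the face of `d₀`
passes through, so that the new face of `d₀'` swallows (almost) all darts at `v`,
keeps everything it had, and covers every edge at `v`. -/
lemma surgery (σ : Equiv.Perm G.Dart) (hrot : IsRotationSystem G σ) (v : V) (d₀ : G.Dart)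
    (hpass : ∃ h : G.Dart, (h.toProd.1 = v ∨ h.toProd.2 = v) ∧
      (faceTracing G σ).SameCycle d₀ h) :
    ∃ (σ' : Equiv.Perm G.Dart) (d₀' : G.Dart), IsRotationSystem G σ' ∧
      (∀ e : G.Dart, (faceTracing G σ).SameCycle d₀ e →
        (faceTracing G σ').SameCycle d₀' e) ∧
      (∀ u : V, G.Adj v u → ∃ d : G.Dart, d.edge = s(v, u) ∧
        (faceTracing G σ').SameCycle d₀' d) := by
  classical
  haveI : DecidableEq V := Classical.decEq V
  haveI : DecidableRel G.Adj := Classical.decRel _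
  set τ := faceTracing G σ with hτdef
  have hτap : ∀ d, τ d = σ d.symm := fun d => rfl
  have hτinv : ∀ d, τ⁻¹ d = (σ⁻¹ d).symm := fun d => rfl
  have hσ1 : ∀ d : G.Dart, (σ d).toProd.1 = d.toProd.1 := hrot.1
  have hσi1 : ∀ d : G.Dart, (σ⁻¹ d).toProd.1 = d.toProd.1 := by
    intro d
    have h2 := hσ1 (σ⁻¹ d)
    rw [Equiv.Perm.coe_inv, Equiv.apply_symm_apply] at h2
    exact h2.symm
  have hτ1 : ∀ d : G.Dart, (τ d).toProd.1 = d.toProd.2 := by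
    intro d; rw [hτap, hσ1]; rfl
  have hτi2 : ∀ d : G.Dart, (τ⁻¹ d).toProd.2 = d.toProd.1 := by
    intro d; rw [hτinv, dart_symm_snd, hσi1]
  set Dv : Finset G.Dart := Finset.univ.filter (fun d => d.toProd.1 = v) with hDvdef
  have hmemDv : ∀ d : G.Dart, d ∈ Dv ↔ d.toProd.1 = v := by
    intro d; simp [hDvdef]
  set P : G.Dart → Prop := fun d => d.toProd.2 = v with hPdef
  -- symm moves between Dv and P
  have hsymmDvP : ∀ d : G.Dart, d ∈ Dv → P d.symm := by
    intro d hd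
    show d.symm.toProd.2 = v
    rw [dart_symm_snd]; exact (hmemDv d).1 hd
  have hsymmPDv : ∀ d : G.Dart, P d → d.symm ∈ Dv := by
    intro d hd; rw [hmemDv]; rw [dart_symm_fst]; exact hd
  -- normalize the pass hypothesis
  obtain ⟨h₁, hh₁or, hh₁sc⟩ := hpass
  obtain ⟨h₀, hh₀P, hh₀sc⟩ : ∃ h₀ : G.Dart, P h₀ ∧ τ.SameCycle d₀ h₀ := by
    rcases hh₁or with h | h
    · refine ⟨τ⁻¹ h₁, ?_, hh₁sc.trans ⟨-1, by simp⟩⟩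
      show (τ⁻¹ h₁).toProd.2 = v
      rw [hτi2]; exact h
    · exact ⟨h₁, h, hh₁sc⟩
  have hτh₀Dv : τ h₀ ∈ Dv := by
    rw [hmemDv, hτ1]; exact hh₀P
  have hscτh₀ : τ.SameCycle d₀ (τ h₀) := hh₀sc.trans ⟨1, by simp⟩
  have hDvne : Dv.Nonempty := ⟨τ h₀, hτh₀Dv⟩
  -- τ⁻¹ maps Dv into P
  have hτiP : ∀ d : G.Dart, d ∈ Dv → P (τ⁻¹ d) := by
    intro d hd
    show (τ⁻¹ d).toProd.2 = v
    rw [hτi2]; exact (hmemDv d).1 hd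
  -- the petal-pairing permutation m
  obtain ⟨m, hm_in, hm_out⟩ := exists_piecewise (fun d : G.Dart => d ∈ Dv)
      (fun d => (firstRet τ P (τ⁻¹ d)).symm) id
      (by
        intro x y hx hy hxy
        have h1 : firstRet τ P (τ⁻¹ x) = firstRet τ P (τ⁻¹ y) := by
          have := congrArg SimpleGraph.Dart.symm hxy
          simpa using this
        have := firstRet_injOn τ P (hτiP x hx) (hτiP y hy) h1
        exact τ⁻¹.injective this)
      (by
        intro x hx
        exact hsymmPDv _ (firstRet_mem τ P (hτiP x hx)))
      (fun x y _ _ h => h) (fun x hx => hx)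
  have hm_fix : ∀ x, x ∉ Dv → m x = x := fun x hx => hm_out x hx
  have hm_mem : ∀ x, x ∈ Dv → m x ∈ Dv := by
    intro x hx; rw [hm_in x hx]; exact hsymmPDv _ (firstRet_mem τ P (hτiP x hx))
  -- petal end as a forward power of τ
  have hE2 : ∀ x, x ∈ Dv →
      firstRet τ P (τ⁻¹ x) = (τ ^ (retTime τ P (τ⁻¹ x) - 1)) x := by
    intro x hx
    have hk := (retTime_spec τ P (hτiP x hx)).1
    have h1 : (τ ^ retTime τ P (τ⁻¹ x)) (τ⁻¹ x) = (τ ^ (retTime τ P (τ⁻¹ x) - 1)) x := by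
      conv_lhs => rw [show retTime τ P (τ⁻¹ x) = (retTime τ P (τ⁻¹ x) - 1) + 1 by omega]
      rw [pow_succ, Equiv.Perm.mul_apply, Equiv.Perm.coe_inv, Equiv.apply_symm_apply]
    rw [firstRet, h1]
  have hE3 : ∀ x, x ∈ Dv → ∀ i, i < retTime τ P (τ⁻¹ x) - 1 → ¬ P ((τ ^ i) x) := by
    intro x hx i hi
    have hspec := retTime_spec τ P (hτiP x hx)
    have h1 : (τ ^ (i+1)) (τ⁻¹ x) = (τ ^ i) x := by
      rw [pow_succ, Equiv.Perm.mul_apply, Equiv.Perm.coe_inv, Equiv.apply_symm_apply]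
    have := hspec.2.2 (i+1) (Nat.succ_pos i) (by omega)
    rwa [h1] at this
  -- prefix agreement machine
  have hprefix : ∀ (τ' : Equiv.Perm G.Dart), (∀ d, ¬ P d → τ' d = τ d) →
      ∀ (e : G.Dart) (j : ℕ), (∀ i, i < j → ¬ P ((τ ^ i) e)) → (τ' ^ j) e = (τ ^ j) e := by
    intro τ' hagr e j hj
    induction j with
    | zero => rfl
    | succ n ih =>
        have h1 : (τ' ^ n) e = (τ ^ n) e := ih (fun i hi => hj i (Nat.lt_succ_of_lt hi))
        rw [pow_succ', pow_succ', Equiv.Perm.mul_apply, Equiv.Perm.mul_apply, h1,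
          hagr _ (hj n (Nat.lt_succ_self n))]
  -- the T machine, for any σ'' that is σL on Dv and σ away from v
  have Tmach : ∀ (σ'' σL : Equiv.Perm G.Dart), (∀ d, d ∈ Dv → σ'' d = σL d) →
      (∀ d : G.Dart, d.toProd.1 ≠ v → σ'' d = σ d) →
      (∀ x ∈ Dv, (faceTracing G σ'').SameCycle x ((σL * m) x)) ∧
      (∀ e : G.Dart, τ.SameCycle e h₀ →
        ∃ x, x ∈ Dv ∧ τ.SameCycle e x ∧ (faceTracing G σ'').SameCycle e x) := by
    intro σ'' σL hyp1 hyp2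
    set τ'' := faceTracing G σ'' with hτ''def
    have hagr : ∀ d, ¬ P d → τ'' d = τ d := by
      intro d hd
      rw [hτ''def, faceTracing_apply, hτap]
      apply hyp2
      rw [dart_symm_fst]
      exact hd
    have T1 : ∀ x, x ∈ Dv → τ''.SameCycle x (firstRet τ P (τ⁻¹ x)) := by
      intro x hx
      refine ⟨((retTime τ P (τ⁻¹ x) - 1 : ℕ) : ℤ), ?_⟩
      rw [zpow_natCast, hprefix τ'' hagr x _ (hE3 x hx), ← hE2 x hx]
    have T2 : ∀ x, x ∈ Dv → τ'' (firstRet τ P (τ⁻¹ x)) = σL (m x) := by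
      intro x hx
      rw [hτ''def, faceTracing_apply]
      rw [hyp1 _ (hsymmPDv _ (firstRet_mem τ P (hτiP x hx))), hm_in x hx]
    have T3 : ∀ x ∈ Dv, τ''.SameCycle x ((σL * m) x) := by
      intro x hx
      refine (T1 x hx).trans ⟨1, ?_⟩
      rw [zpow_one, T2 x hx]
      rfl
    refine ⟨T3, ?_⟩
    -- REACH
    intro e hsc
    have hex : ∃ i : ℕ, P ((τ ^ i) e) := by
      obtain ⟨n, _, hn⟩ := hsc.exists_pow_eq'
      exact ⟨n, by rw [hn]; exact hh₀P⟩
    set j := Nat.find hex with hjdef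
    have hjP : P ((τ ^ j) e) := Nat.find_spec hex
    have hjmin : ∀ i, i < j → ¬ P ((τ ^ i) e) := fun i hi => Nat.find_min hex hi
    set r := (τ ^ j) e with hrdef
    have hre : τ''.SameCycle e r := ⟨(j : ℤ), by rw [zpow_natCast, hprefix τ'' hagr e j hjmin]⟩
    have hreτ : τ.SameCycle e r := ⟨(j : ℤ), by rw [zpow_natCast]⟩
    have hrsymmDv : r.symm ∈ Dv := hsymmPDv _ hjP
    have hxDv : m⁻¹ r.symm ∈ Dv := by
      by_contra hc
      have h1 := hm_fix _ hc
      rw [show m (m⁻¹ r.symm) = r.symm from m.apply_symm_apply r.symm] at h1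
      exact hc (h1 ▸ hrsymmDv)
    have hmx : m (m⁻¹ r.symm) = r.symm := m.apply_symm_apply r.symm
    have hfr : firstRet τ P (τ⁻¹ (m⁻¹ r.symm)) = r := by
      have h1 := hm_in _ hxDv
      rw [hmx] at h1
      have h2 := congrArg SimpleGraph.Dart.symm h1
      simpa using h2.symm
    have hxr : τ.SameCycle (m⁻¹ r.symm) r := by
      have h2 := hE2 _ hxDv
      rw [hfr] at h2
      exact ⟨((retTime τ P (τ⁻¹ (m⁻¹ r.symm)) - 1 : ℕ) : ℤ), by rw [zpow_natCast, ← h2]⟩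
    have hxr'' : τ''.SameCycle (m⁻¹ r.symm) r := by
      have h2 := T1 _ hxDv
      rwa [hfr] at h2
    exact ⟨m⁻¹ r.symm, hxDv, hreτ.trans hxr.symm, hre.trans hxr''.symm⟩
  -- chaining SameCycle through a cycle-on-S permutation
  have chainer : ∀ (τ'' γ : Equiv.Perm G.Dart) (S : Finset G.Dart),
      (∀ x ∈ S, τ''.SameCycle x (γ x)) → (∀ x ∈ S, γ x ∈ S) →
      ∀ x ∈ S, ∀ y, γ.SameCycle x y → τ''.SameCycle x y := by
    intro τ'' γ S hstep hmaps x hx y hsc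
    obtain ⟨n, hlt, rfl⟩ := hsc.exists_pow_eq'
    clear hlt hsc
    induction n with
    | zero => exact Equiv.Perm.SameCycle.refl _ _
    | succ k ih =>
        have hmem : ∀ i : ℕ, (γ ^ i) x ∈ S := by
          intro i
          induction i with
          | zero => exact hx
          | succ l ihl => rw [pow_succ', Equiv.Perm.mul_apply]; exact hmaps _ ihl
        have h1 : (γ ^ (k+1)) x = γ ((γ ^ k) x) := by
          rw [pow_succ', Equiv.Perm.mul_apply]
        rw [h1]
        exact ih.trans (hstep _ (hmem k))
  -- builder for σ' given a vertex cycle σL on Dv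
  have mkσ' : ∀ σL : Equiv.Perm G.Dart, CycOn σL Dv →
      ∃ σ' : Equiv.Perm G.Dart, (∀ d, d ∈ Dv → σ' d = σL d) ∧
        (∀ d : G.Dart, d.toProd.1 ≠ v → σ' d = σ d) ∧ IsRotationSystem G σ' := by
    intro σL hσL
    obtain ⟨σ', hσ'in, hσ'out⟩ := exists_piecewise (fun d : G.Dart => d ∈ Dv) σL σ
      (fun x y _ _ h => σL.injective h)
      (fun x hx => hσL.mapsTo hx)
      (fun x y _ _ h => σ.injective h)
      (by
        intro x hx hc
        have hc' : σ x ∈ Dv := hc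
        apply hx
        show x ∈ Dv
        rw [hmemDv] at hc' ⊢
        rw [hσ1] at hc'
        exact hc')
    have hout' : ∀ d : G.Dart, d.toProd.1 ≠ v → σ' d = σ d := by
      intro d hd
      apply hσ'out
      rw [hmemDv]
      exact hd
    refine ⟨σ', fun d hd => hσ'in d hd, hout', ?_, ?_⟩
    · -- first components preserved
      intro d
      by_cases hd : d ∈ Dv
      · rw [hσ'in d hd]
        have h1 := (hmemDv _).1 (hσL.mapsTo hd)
        have h2 := (hmemDv _).1 hd
        rw [h1, h2]
      · rw [hσ'out d hd, hσ1]
    · -- single cycle at each vertex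
      intro d d' hdd
      by_cases hd : d ∈ Dv
      · have hd' : d' ∈ Dv := by
          rw [hmemDv] at hd ⊢
          rw [← hdd]; exact hd
        refine sameCycle_of_agree (S := (Dv : Set G.Dart)) ?_ ?_ hd (hσL.2 d hd d' hd')
        · intro w hw; exact hσL.mapsTo hw
        · intro w hw; exact hσ'in w hw
      · have hd' : d' ∉ Dv := by
          rw [hmemDv] at hd ⊢
          rw [← hdd]; exact hd
        have hsc : σ.SameCycle d d' := hrot.2 d d' hdd
        refine sameCycle_of_agree (S := {w : G.Dart | w.toProd.1 = d.toProd.1}) ?_ ?_ rfl hsc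
        · intro w hw
          simp only [Set.mem_setOf_eq] at hw ⊢
          rw [hσ1]; exact hw
        · intro w hw
          simp only [Set.mem_setOf_eq] at hw
          apply hout'
          rw [hw]
          intro hc
          rw [hmemDv] at hd
          exact hd hc
  -- sign case analysis
  rcases Int.units_eq_one_or (Equiv.Perm.sign m) with hsgn | hsgn
  · -- FULL case
    obtain ⟨σL, hσL, hγ⟩ := (perm_main Dv.card Dv m le_rfl hm_fix).1 hsgn
    obtain ⟨σ', hσ'in, hσ'out, hσ'rot⟩ := mkσ' σL hσL
    obtain ⟨T3, REACH⟩ := Tmach σ' σL hσ'in hσ'out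
    set τ' := faceTracing G σ' with hτ'def
    have hγmaps : ∀ x ∈ Dv, (σL * m) x ∈ Dv := fun x hx => hγ.mapsTo hx
    have hunify : ∀ x ∈ Dv, ∀ y ∈ Dv, τ'.SameCycle x y := by
      intro x hx y hy
      exact chainer τ' (σL * m) Dv T3 hγmaps x hx y (hγ.2 x hx y hy)
    refine ⟨σ', τ h₀, hσ'rot, ?_, ?_⟩
    · intro e hsc
      obtain ⟨x, hxDv, _, hx2⟩ := REACH e (hsc.symm.trans hh₀sc)
      exact (hunify (τ h₀) hτh₀Dv x hxDv).trans hx2.symm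
    · intro u hadj
      refine ⟨SimpleGraph.Dart.mk (v, u) hadj, rfl, ?_⟩
      apply hunify (τ h₀) hτh₀Dv
      rw [hmemDv]
  · -- sign m = -1
    by_cases hex : ∃ x₀, x₀ ∈ Dv ∧ m x₀ ≠ x₀ ∧ ¬ τ.SameCycle d₀ x₀
    · -- sacrifice case
      obtain ⟨x₀, hx₀Dv, hx₀mv, hx₀ns⟩ := hex
      obtain ⟨σL, hσL, hγ⟩ := (perm_main Dv.card Dv m le_rfl hm_fix).2 hsgn x₀ hx₀mv
      obtain ⟨σ', hσ'in, hσ'out, hσ'rot⟩ := mkσ' σL hσL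
      obtain ⟨T3, REACH⟩ := Tmach σ' σL hσ'in hσ'out
      set τ' := faceTracing G σ' with hτ'def
      set E : Finset G.Dart := Dv.erase x₀ with hEdef
      have hT3E : ∀ x ∈ E, τ'.SameCycle x ((σL * m) x) := by
        intro x hx; exact T3 x (Finset.mem_of_mem_erase hx)
      have hγmaps : ∀ x ∈ E, (σL * m) x ∈ E := fun x hx => hγ.mapsTo hx
      have hunify : ∀ x ∈ E, ∀ y ∈ E, τ'.SameCycle x y := by
        intro x hx y hy
        exact chainer τ' (σL * m) E hT3E hγmaps x hx y (hγ.2 x hx y hy)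
      have hτh₀E : τ h₀ ∈ E := by
        rw [hEdef]
        refine Finset.mem_erase.2 ⟨?_, hτh₀Dv⟩
        intro hc
        rw [← hc] at hx₀ns
        exact hx₀ns hscτh₀
      refine ⟨σ', τ h₀, hσ'rot, ?_, ?_⟩
      · intro e hsc
        obtain ⟨x, hxDv, hx1, hx2⟩ := REACH e (hsc.symm.trans hh₀sc)
        have hxE : x ∈ E := by
          rw [hEdef]
          refine Finset.mem_erase.2 ⟨?_, hxDv⟩
          intro hc
          rw [hc] at hx1
          exact hx₀ns ((hsc.trans hx1))
        exact (hunify (τ h₀) hτh₀E x hxE).trans hx2.symm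
      · intro u hadj
        set d : G.Dart := SimpleGraph.Dart.mk (v, u) hadj with hddef
        have hdDv : d ∈ Dv := by rw [hmemDv]
        by_cases hdx : d = x₀
        · -- use the reversed dart
          refine ⟨d.symm, by rw [SimpleGraph.Dart.edge_symm]; rfl, ?_⟩
          have hstep : τ' d.symm = σL x₀ := by
            rw [hτ'def, faceTracing_apply, SimpleGraph.Dart.symm_symm, hσ'in d hdDv, hdx]
          have hσLx₀ : σL x₀ ∈ E := by
            rw [hEdef]
            refine Finset.mem_erase.2 ⟨?_, hσL.mapsTo hx₀Dv⟩
            intro hc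
            have hmx₀Dv : m x₀ ∈ Dv := hm_mem x₀ hx₀Dv
            exact not_sameCycle_of_fixed hc (Ne.symm hx₀mv)
              (hσL.2 x₀ hx₀Dv (m x₀) hmx₀Dv)
          have hstep2 : τ'.SameCycle d.symm (σL x₀) := ⟨1, by rw [zpow_one, hstep]⟩
          exact (hunify (τ h₀) hτh₀E (σL x₀) hσLx₀).trans hstep2.symm
        · have hdE : d ∈ E := by
            rw [hEdef]; exact Finset.mem_erase.2 ⟨hdx, hdDv⟩
          exact ⟨d, rfl, hunify (τ h₀) hτh₀E d hdE⟩
    · -- impossible case : sign would be 1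
      exfalso
      push_neg at hex
      -- the vertex-restricted rotation σv
      obtain ⟨σv, hσv_in, hσv_out⟩ := exists_piecewise (fun d : G.Dart => d ∈ Dv) σ id
        (fun x y _ _ h => σ.injective h)
        (by
          intro x hx
          rw [hmemDv] at hx ⊢
          rw [hσ1]; exact hx)
        (fun x y _ _ h => h) (fun x hx => hx)
      obtain ⟨T3σ, _⟩ := Tmach σ σv (fun d hd => (hσv_in d hd).symm) (fun d _ => rfl)
      have hT3τ : ∀ x ∈ Dv, τ.SameCycle x ((σv * m) x) := by
        intro x hx
        exact T3σ x hx
      -- every dart of Dv lies on the face of d₀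
      have hNS : ∀ x, x ∈ Dv → τ.SameCycle d₀ x := by
        intro x hx
        by_contra hcon
        -- closure of bad set under σ
        have hstepNS : ∀ y, y ∈ Dv → ¬ τ.SameCycle d₀ y → (σ y ∈ Dv ∧ ¬ τ.SameCycle d₀ (σ y)) := by
          intro y hy hyns
          have hmy : m y = y := by
            by_contra hmy
            exact hyns (hex y hy hmy)
          have h1 : τ.SameCycle y (σ y) := by
            have := hT3τ y hy
            rwa [Equiv.Perm.mul_apply, hmy, hσv_in y hy] at this
          refine ⟨by rw [hmemDv] at hy ⊢; rw [hσ1]; exact hy, ?_⟩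
          intro hc
          exact hyns (hc.trans h1.symm)
        have hpow : ∀ i : ℕ, (σ ^ i) x ∈ Dv ∧ ¬ τ.SameCycle d₀ ((σ ^ i) x) := by
          intro i
          induction i with
          | zero => exact ⟨hx, hcon⟩
          | succ k ih =>
              have h1 : (σ ^ (k+1)) x = σ ((σ ^ k) x) := by
                rw [pow_succ', Equiv.Perm.mul_apply]
              rw [h1]
              exact hstepNS _ ih.1 ih.2
        -- but τ h₀ lies on both
        have hsc : σ.SameCycle x (τ h₀) := by
          apply hrot.2
          rw [(hmemDv x).1 hx, (hmemDv (τ h₀)).1 hτh₀Dv]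
        obtain ⟨n, _, hn⟩ := hsc.exists_pow_eq'
        have := (hpow n).2
        rw [hn] at this
        exact this hscτh₀
      -- transfer: σv * m cycles on all of Dv
      have hτDv : ∀ y : G.Dart, τ y ∈ Dv → P y := by
        intro y hy
        show y.toProd.2 = v
        rw [← hτ1 y]
        exact (hmemDv _).1 hy
      have hfr_eq : ∀ x, x ∈ Dv → ∀ j : ℕ, P ((τ ^ j) x) → (∀ i, i < j → ¬ P ((τ ^ i) x)) →
          (σv * m) x = (τ ^ (j+1)) x := by
        intro x hx j hjP hjmin
        have hkey : firstRet τ P (τ⁻¹ x) = (τ ^ j) x := by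
          rw [hE2 x hx]
          have hle1 : retTime τ P (τ⁻¹ x) - 1 ≤ j := by
            by_contra hc
            push_neg at hc
            exact hE3 x hx j hc hjP
          have hle2 : j ≤ retTime τ P (τ⁻¹ x) - 1 := by
            by_contra hc
            push_neg at hc
            refine hjmin _ hc ?_
            rw [← hE2 x hx]
            exact firstRet_mem τ P (hτiP x hx)
          rw [le_antisymm hle1 hle2]
        rw [Equiv.Perm.mul_apply, hm_in x hx, hkey]
        have hmem : ((τ ^ j) x).symm ∈ Dv := hsymmPDv _ hjP
        rw [hσv_in _ hmem, ← hτap, pow_succ', Equiv.Perm.mul_apply]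
      have hTconv : ∀ n : ℕ, ∀ x, x ∈ Dv → (τ ^ n) x ∈ Dv → (σv * m).SameCycle x ((τ ^ n) x) := by
        intro n
        induction n using Nat.strong_induction_on with
        | _ n IH =>
            intro x hx hn
            rcases Nat.eq_zero_or_pos n with rfl | hpos
            · exact Equiv.Perm.SameCycle.refl _ _
            · have hPn : P ((τ ^ (n-1)) x) := by
                apply hτDv
                rw [← Equiv.Perm.mul_apply, ← pow_succ']
                rw [show n - 1 + 1 = n by omega]
                exact hn
              have hexP : ∃ i : ℕ, P ((τ ^ i) x) := ⟨n-1, hPn⟩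
              set j := Nat.find hexP with hjdef
              have hjP : P ((τ ^ j) x) := Nat.find_spec hexP
              have hjmin : ∀ i, i < j → ¬ P ((τ ^ i) x) := fun i hi => Nat.find_min hexP hi
              have hjle : j ≤ n - 1 := Nat.find_le hPn
              have hγx : (σv * m) x = (τ ^ (j+1)) x := hfr_eq x hx j hjP hjmin
              have hγxDv : (σv * m) x ∈ Dv := by
                have h1 : m x ∈ Dv := hm_mem x hx
                rw [Equiv.Perm.mul_apply, hσv_in _ h1]
                rw [hmemDv] at h1 ⊢
                rw [hσ1]; exact h1
              have hrest : (τ ^ (n - (j+1))) ((σv * m) x) = (τ ^ n) x := by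
                rw [hγx, ← Equiv.Perm.mul_apply, ← pow_add]
                congr 2
                omega
              have hIH := IH (n - (j+1)) (by omega) ((σv * m) x) hγxDv
                (by rw [hrest]; exact hn)
              rw [hrest] at hIH
              exact (Equiv.Perm.SameCycle.refl (σv*m) x |>.trans ⟨1, by rw [zpow_one]⟩).trans hIH
      have hγCyc : CycOn (σv * m) Dv := by
        constructor
        · intro x hx
          rw [Equiv.Perm.mul_apply, hm_fix x hx, hσv_out x hx]
          rfl
        · intro x hx y hy
          have h1 : τ.SameCycle x y := (hNS x hx).symm.trans (hNS y hy)
          obtain ⟨n, _, rfl⟩ := h1.exists_pow_eq'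
          exact hTconv n x hx hy
      have hσvCyc : CycOn σv Dv := by
        constructor
        · intro x hx; rw [hσv_out x hx]; rfl
        · intro x hx y hy
          have h1 : σ.SameCycle x y := by
            apply hrot.2
            rw [(hmemDv x).1 hx, (hmemDv y).1 hy]
          refine sameCycle_of_agree (S := (Dv : Set G.Dart)) ?_ ?_ hx h1
          · intro w hw
            rw [Finset.mem_coe, hmemDv] at hw ⊢
            rw [hσ1]; exact hw
          · intro w hw; exact hσv_in w hw
      -- sign contradiction
      have hs1 := cycOn_sign hσvCyc hDvne
      have hs2 := cycOn_sign hγCyc hDvne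
      have hs3 : Equiv.Perm.sign (σv * m) = Equiv.Perm.sign σv * Equiv.Perm.sign m := by
        rw [map_mul]
      rw [hs2, hs1, hsgn] at hs3
      have h5 : (-1 : ℤˣ) ^ (Dv.card - 1) * 1 = (-1) ^ (Dv.card - 1) * (-1) := by
        rw [mul_one]; exact hs3
      have h6 := mul_left_cancel h5
      exact absurd h6 (by decide)

end Graph

end EOE

namespace EOE
section Graph2
variable {V : Type*} [Fintype V] [DecidableEq V] {G : SimpleGraph V}

lemma dart_edge_endpoints {d : G.Dart} {x y : V} (h : d.edge = s(x, y)) :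
    (d.toProd.1 = x ∧ d.toProd.2 = y) ∨ (d.toProd.1 = y ∧ d.toProd.2 = x) := by
  have h2 : s(d.toProd.1, d.toProd.2) = s(x, y) := by
    rw [← h]
    show Sym2.mk _ _ = d.edge
    rw [SimpleGraph.Dart.edge]
  rwa [Sym2.eq_iff] at h2

lemma exists_rotation : ∃ σ : Equiv.Perm G.Dart, IsRotationSystem G σ := by
  classical
  haveI : DecidableRel G.Adj := Classical.decRel _
  have hchoice : ∀ v : V, ∃ c : Equiv.Perm G.Dart,
      CycOn c (Finset.univ.filter (fun d : G.Dart => d.toProd.1 = v)) :=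
    fun v => exists_cycOn _
  choose c hc using hchoice
  set F : G.Dart → G.Dart := fun d => c d.toProd.1 d with hF
  have hfib : ∀ d : G.Dart, (F d).toProd.1 = d.toProd.1 := by
    intro d
    have hd : d ∈ Finset.univ.filter (fun x : G.Dart => x.toProd.1 = d.toProd.1) := by
      simp
    have h2 := (hc d.toProd.1).mapsTo hd
    simp only [Finset.mem_filter, Finset.mem_univ, true_and] at h2
    exact h2
  have hinj : Function.Injective F := by
    intro a b hab
    have h1 : a.toProd.1 = b.toProd.1 := by rw [← hfib a, ← hfib b, hab]
    rw [hF] at hab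
    simp only at hab
    rw [h1] at hab
    exact (c b.toProd.1).injective hab
  set σ := Equiv.ofBijective F (Finite.injective_iff_bijective.1 hinj) with hσ
  have hσap : ∀ d, σ d = F d := fun d => rfl
  refine ⟨σ, ?_, ?_⟩
  · intro d; rw [hσap]; exact hfib d
  · intro d d' hdd
    have hd : d ∈ Finset.univ.filter (fun x : G.Dart => x.toProd.1 = d.toProd.1) := by simp
    have hd' : d' ∈ Finset.univ.filter (fun x : G.Dart => x.toProd.1 = d.toProd.1) := by
      simp [← hdd]
    have hsc := (hc d.toProd.1).2 d hd d' hd'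
    refine sameCycle_of_agree
      (S := ((Finset.univ.filter (fun x : G.Dart => x.toProd.1 = d.toProd.1) : Finset G.Dart) :
        Set G.Dart)) ?_ ?_ hd hsc
    · intro w hw
      exact (hc d.toProd.1).mapsTo hw
    · intro w hw
      rw [Finset.mem_coe, Finset.mem_filter] at hw
      rw [hσap, hF]
      simp only
      rw [hw.2]

lemma exists_frontier (hconn : G.Connected) (S : Finset V) (hS : S.Nonempty)
    (hne : S ≠ Finset.univ) : ∃ w, w ∉ S ∧ ∃ s ∈ S, G.Adj s w := by
  classical
  obtain ⟨s₀, hs₀⟩ := hS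
  obtain ⟨t, ht⟩ : ∃ t, t ∉ S := by
    by_contra hall
    push_neg at hall
    exact hne (Finset.eq_univ_iff_forall.2 hall)
  obtain ⟨p⟩ := hconn.preconnected s₀ t
  have key : ∀ (x t' : V) (p : G.Walk x t'), x ∈ S → t' ∉ S →
      ∃ w, w ∉ S ∧ ∃ s ∈ S, G.Adj s w := by
    intro x t' p
    induction p with
    | nil => intro hx hnx; exact absurd hx hnx
    | @cons u v' t'' h q ih =>
        intro hx hnt
        by_cases hv : v' ∈ S
        · exact ih hv hnt
        · exact ⟨v', hv, u, hx, h⟩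
  exact key s₀ t p hs₀ ht

/-- The covering invariant. -/
def Inv (G : SimpleGraph V) (σ : Equiv.Perm G.Dart) (d₀ : G.Dart) (S : Finset V) : Prop :=
  (∀ e ∈ G.edgeSet, (∀ x, x ∈ e → x ∈ S) → ∃ d : G.Dart, d.edge = e ∧
    (faceTracing G σ).SameCycle d₀ d) ∧
  (∀ w, w ∉ S → (∃ s ∈ S, G.Adj s w) → ∃ d : G.Dart,
    (d.toProd.1 = w ∨ d.toProd.2 = w) ∧ (faceTracing G σ).SameCycle d₀ d)

lemma inv_step (σ : Equiv.Perm G.Dart) (d₀ : G.Dart) (S : Finset V)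
    (hrot : IsRotationSystem G σ) (hinv : Inv G σ d₀ S) {w : V} (hw : w ∉ S)
    (hadj : ∃ s ∈ S, G.Adj s w) :
    ∃ σ' d₀', IsRotationSystem G σ' ∧ Inv G σ' d₀' (insert w S) := by
  classical
  obtain ⟨d, hd1, hd2⟩ := hinv.2 w hw hadj
  obtain ⟨σ', d₀', hrot', K1, K2⟩ := surgery σ hrot w d₀ ⟨d, hd1, hd2⟩
  refine ⟨σ', d₀', hrot', ?_, ?_⟩
  · intro e he hend
    revert he hend
    refine Sym2.ind ?_ e
    intro a b he hend
    rw [SimpleGraph.mem_edgeSet] at he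
    have ha := hend a (Sym2.mem_mk_left a b)
    have hb := hend b (Sym2.mem_mk_right a b)
    by_cases haw : a = w
    · subst haw
      obtain ⟨d', hd'1, hd'2⟩ := K2 b he
      exact ⟨d', hd'1, hd'2⟩
    by_cases hbw : b = w
    · subst hbw
      obtain ⟨d', hd'1, hd'2⟩ := K2 a he.symm
      refine ⟨d', ?_, hd'2⟩
      rw [hd'1]
      exact Sym2.eq_swap
    · have haS : a ∈ S := by
        rcases Finset.mem_insert.1 ha with h | h
        · exact absurd h haw
        · exact h
      have hbS : b ∈ S := by
        rcases Finset.mem_insert.1 hb with h | h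
        · exact absurd h hbw
        · exact h
      have hboth : ∀ x, x ∈ s(a, b) → x ∈ S := by
        intro x hx
        rcases Sym2.mem_iff.1 hx with rfl | rfl
        · exact haS
        · exact hbS
      obtain ⟨d', hd'1, hd'2⟩ := hinv.1 s(a, b) ((SimpleGraph.mem_edgeSet G).2 he) hboth
      exact ⟨d', hd'1, K1 d' hd'2⟩
  · intro z hz hzadj
    obtain ⟨s', hs', hadj'⟩ := hzadj
    have hzS : z ∉ S := fun h => hz (Finset.mem_insert_of_mem h)
    rcases Finset.mem_insert.1 hs' with rfl | hs'S
    · obtain ⟨d', hd'1, hd'2⟩ := K2 z hadj'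
      refine ⟨d', ?_, hd'2⟩
      rcases dart_edge_endpoints hd'1 with ⟨_, h2⟩ | ⟨h1, _⟩
      · exact Or.inr h2
      · exact Or.inl h1
    · obtain ⟨d', hd'1, hd'2⟩ := hinv.2 z hzS ⟨s', hs'S, hadj'⟩
      exact ⟨d', hd'1, K1 d' hd'2⟩

lemma grow (hconn : G.Connected) : ∀ (k : ℕ) (S : Finset V),
    (Finset.univ \ S).card ≤ k → S.Nonempty →
    (∃ σ d₀, IsRotationSystem G σ ∧ Inv G σ d₀ S) →
    ∃ σ d₀, IsRotationSystem G σ ∧ Inv G σ d₀ (Finset.univ : Finset V) := by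
  classical
  intro k
  induction k with
  | zero =>
      intro S hcard _ h
      have hSu : S = Finset.univ := by
        have h1 : Finset.univ \ S = ∅ := Finset.card_eq_zero.1 (Nat.le_zero.1 hcard)
        have h2 : Finset.univ ⊆ S := by
          intro x _
          by_contra hx
          have : x ∈ Finset.univ \ S := Finset.mem_sdiff.2 ⟨Finset.mem_univ x, hx⟩
          rw [h1] at this
          exact absurd this (Finset.notMem_empty x)
        exact Finset.univ_subset_iff.1 h2
      rwa [hSu] at h
  | succ n ih =>
      intro S hcard hS h
      by_cases hSu : S = Finset.univ
      · rwa [hSu] at h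
      · obtain ⟨w, hw, hadj⟩ := exists_frontier hconn S hS hSu
        obtain ⟨σ, d₀, hrot, hinv⟩ := h
        obtain ⟨σ', d₀', hrot', hinv'⟩ := inv_step σ d₀ S hrot hinv hw hadj
        refine ih (insert w S) ?_ ⟨w, Finset.mem_insert_self w S⟩ ⟨σ', d₀', hrot', hinv'⟩
        have h1 : Finset.univ \ insert w S = (Finset.univ \ S).erase w := by
          ext x
          simp only [Finset.mem_sdiff, Finset.mem_insert, Finset.mem_erase, Finset.mem_univ,
            true_and, not_or]
          try tauto
        rw [h1, Finset.card_erase_of_mem (Finset.mem_sdiff.2 ⟨Finset.mem_univ w, hw⟩)]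
        omega


end Graph2
end EOE

open EOE in
/-- Every finite connected simple graph with at least one edge has a rotation system with a
single face (orbit of the face-tracing permutation) containing at least one dart of every
edge, i.e. an edge-outer orientable embedding. -/
theorem edge_outer_embedding_exists {V : Type*} [Fintype V] (G : SimpleGraph V)
    (hconn : G.Connected) (hne : G.edgeSet.Nonempty) :
    ∃ σ : Equiv.Perm G.Dart, IsRotationSystem G σ ∧
      ∃ d₀ : G.Dart, ∀ e ∈ G.edgeSet, ∃ d : G.Dart,
        d.edge = e ∧ (faceTracing G σ).SameCycle d₀ d := by
  classical
  obtain ⟨a₀, b₀, hab⟩ : ∃ a b, G.Adj a b := by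
    obtain ⟨e, he⟩ := hne
    revert he
    refine Sym2.ind ?_ e
    intro a b he
    exact ⟨a, b, (SimpleGraph.mem_edgeSet G).1 he⟩
  obtain ⟨σ₀, hrot₀⟩ := exists_rotation (G := G)
  set dstart : G.Dart := SimpleGraph.Dart.mk (a₀, b₀) hab with hds
  obtain ⟨σ₁, d₁, hrot₁, _, K2⟩ := surgery σ₀ hrot₀ a₀ dstart
    ⟨dstart, Or.inl rfl, Equiv.Perm.SameCycle.refl _ _⟩
  have hinv1 : Inv G σ₁ d₁ {a₀} := by
    constructor
    · intro e he hend
      exfalso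
      revert he hend
      refine Sym2.ind ?_ e
      intro a b he hend
      have ha := Finset.mem_singleton.1 (hend a (Sym2.mem_mk_left a b))
      have hb := Finset.mem_singleton.1 (hend b (Sym2.mem_mk_right a b))
      rw [SimpleGraph.mem_edgeSet] at he
      rw [ha, hb] at he
      exact G.irrefl he
    · intro z hz hzadj
      obtain ⟨s', hs', hadj'⟩ := hzadj
      have hs'a : s' = a₀ := Finset.mem_singleton.1 hs'
      subst hs'a
      obtain ⟨d', hd'1, hd'2⟩ := K2 z hadj'
      refine ⟨d', ?_, hd'2⟩
      rcases dart_edge_endpoints hd'1 with ⟨_, h2⟩ | ⟨h1, _⟩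
      · exact Or.inr h2
      · exact Or.inl h1
  obtain ⟨σ, d₀, hrot, hinv⟩ := grow hconn (Finset.univ \ {a₀}).card {a₀} le_rfl
    ⟨a₀, Finset.mem_singleton_self a₀⟩ ⟨σ₁, d₁, hrot₁, hinv1⟩
  exact ⟨σ, hrot, d₀, fun e he => hinv.1 e he (fun x _ => Finset.mem_univ x)⟩
end

section
/- Let G be a finite connected simple graph with at least one edge. Then there exists a rotation system σ on G such that (i) some single orbit of the face-tracing permutation of σ contains at least one dart of every edge of G, and (ii) the number of orbits of the face-tracing permutation of σ is minimum over all rotation systems on G (by Euler's formula, this means the corresponding orientable embedding has maximum orientable genus). -/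
open SimpleGraph

/-- The number of orbits of a permutation `f` of a finite type (for the face-tracing
permutation of a rotation system, this is the number of faces of the embedding). -/
noncomputable def numOrbits {α : Type*} (f : Equiv.Perm α) : ℕ :=
  Nat.card (Quotient (Setoid.mk f.SameCycle
    ⟨fun x => Equiv.Perm.SameCycle.refl f x, fun h => h.symm, fun h h' => h.trans h'⟩))

open Equiv Equiv.Perm

section PermCore
variable {α : Type*}

lemma sameCycle_of_natpow {f : Equiv.Perm α} {x y : α} {n : ℕ} (h : (f ^ n) x = y) :
    f.SameCycle x y :=
  ⟨(n : ℤ), by simpa using h⟩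

lemma exists_pos_pow_eq [Finite α] {f : Equiv.Perm α} {x y : α} (h : f.SameCycle x y) :
    ∃ n : ℕ, 0 < n ∧ (f ^ n) x = y := by
  obtain ⟨i, _, hi⟩ := h.exists_pow_eq'
  rcases Nat.eq_zero_or_pos i with h0 | hpos
  · subst h0
    simp only [pow_zero, Equiv.Perm.coe_one, id_eq] at hi
    exact ⟨orderOf f, orderOf_pos f, by simp [pow_orderOf_eq_one, hi]⟩
  · exact ⟨i, hpos, hi⟩

lemma walk_reach {f π : Equiv.Perm α} {u t : α} :
    ∀ n : ℕ, 0 < n → (f ^ n) u = t →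
      (∀ i : ℕ, 0 < i → i < n → π ((f ^ i) u) = (f ^ i) u) →
      (π * f).SameCycle u (π t) := by
  intro n
  induction n generalizing u with
  | zero => intro h; omega
  | succ n ih =>
    intro _ ht hmid
    rcases Nat.eq_zero_or_pos n with h0 | hpos
    · subst h0
      have : (π * f) u = π t := by
        simp only [Equiv.Perm.mul_apply]
        rw [← ht]; simp
      exact sameCycle_of_natpow (n := 1) (by simpa using this)
    · have h1 : π (f u) = f u := by
        have := hmid 1 one_pos (by omega); simpa using this
      have step : (π * f) u = f u := by simp [Equiv.Perm.mul_apply, h1]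
      have hstep : ∀ i : ℕ, (f ^ i) (f u) = (f ^ (i + 1)) u := by
        intro i; rw [pow_succ, Equiv.Perm.mul_apply]
      have ht' : (f ^ n) (f u) = t := by rw [hstep n]; exact ht
      have hmid' : ∀ i : ℕ, 0 < i → i < n → π ((f ^ i) (f u)) = (f ^ i) (f u) := by
        intro i hi hin
        rw [hstep i]
        exact hmid (i + 1) (by omega) (by omega)
      have htail := ih hpos ht' hmid'
      exact (sameCycle_of_natpow (n := 1) (by simpa using step)).trans htail

lemma sameCycle_mul_of_fixed [Finite α] {f π : Equiv.Perm α} {u v : α}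
    (hfix : ∀ w, f.SameCycle u w → π w = w) (huv : f.SameCycle u v) :
    (π * f).SameCycle u v := by
  obtain ⟨n, _, hn⟩ := exists_pos_pow_eq huv
  have key : ∀ m : ℕ, ((π * f) ^ m) u = (f ^ m) u := by
    intro m
    induction m with
    | zero => rfl
    | succ m ih =>
      rw [pow_succ', pow_succ']
      simp only [Equiv.Perm.mul_apply, ih]
      exact hfix _ (sameCycle_of_natpow (n := m + 1) (by rw [pow_succ']; simp))
  exact sameCycle_of_natpow (n := n) (by rw [key n]; exact hn)

/-- From a point whose forward orbit hits `{a,y,o}`, we reach (in the modified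
permutation `π * f`) the `π`-image of the first hit. -/
lemma reach_triple [Finite α] (f π : Equiv.Perm α) (a y o u : α)
    (hπfix : ∀ x, x ≠ a → x ≠ y → x ≠ o → π x = x)
    (hex : ∃ n : ℕ, 0 < n ∧ ((f ^ n) u = a ∨ (f ^ n) u = y ∨ (f ^ n) u = o)) :
    ∃ t, (t = a ∨ t = y ∨ t = o) ∧ f.SameCycle u t ∧ (π * f).SameCycle u (π t) := by
  classical
  have hfind := Nat.find_spec hex
  set n := Nat.find hex with hn
  refine ⟨(f ^ n) u, hfind.2, sameCycle_of_natpow rfl, ?_⟩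
  refine walk_reach n hfind.1 rfl ?_
  intro i hi hin
  refine hπfix _ ?_ ?_ ?_ <;>
  · intro hEq
    exact absurd (Nat.find_min hex hin) (by simp [hi, hEq])

end PermCore

section PermCore2
variable {α : Type*}

lemma merge_core [Finite α] [DecidableEq α] (f : Equiv.Perm α) (a y o : α)
    (hya : y ≠ a) (hoa : o ≠ a) (hyo : y ≠ o)
    {my mo : ℕ}
    (hmy0 : 0 < my) (hmyv : (f ^ my) a = y) (hmymin : ∀ i, 0 < i → i < my → (f ^ i) a ≠ y)
    (hmo0 : 0 < mo) (hmov : (f ^ mo) a = o) (hmomin : ∀ i, 0 < i → i < mo → (f ^ i) a ≠ o)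
    {p : ℕ} (hp0 : 0 < p) (hpv : (f ^ p) a = a) (hpmin : ∀ i, 0 < i → i < p → (f ^ i) a ≠ a)
    (hmyp : my < p) (hmop : mo < p) (hord : my < mo) :
    ∀ u w, f.SameCycle a u → f.SameCycle a w →
      ((Equiv.swap a o * Equiv.swap a y) * f).SameCycle u w := by
  classical
  set π := Equiv.swap a o * Equiv.swap a y with hπdef
  have hπa : π a = y := by
    rw [hπdef, Equiv.Perm.mul_apply, Equiv.swap_apply_left,
      Equiv.swap_apply_of_ne_of_ne hya hyo]
  have hπy : π y = o := by
    rw [hπdef, Equiv.Perm.mul_apply, Equiv.swap_apply_right, Equiv.swap_apply_left]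
  have hπo : π o = a := by
    rw [hπdef, Equiv.Perm.mul_apply,
      Equiv.swap_apply_of_ne_of_ne hoa (Ne.symm hyo), Equiv.swap_apply_right]
  have hπfix : ∀ x, x ≠ a → x ≠ y → x ≠ o → π x = x := by
    intro x hxa hxy hxo
    rw [hπdef, Equiv.Perm.mul_apply, Equiv.swap_apply_of_ne_of_ne hxa hxy,
      Equiv.swap_apply_of_ne_of_ne hxa hxo]
  have cancel : ∀ i j : ℕ, i ≤ j → (f ^ i) a = (f ^ j) a → (f ^ (j - i)) a = a := by
    intro i j hij hEq
    have h2 : (f ^ i) ((f ^ (j - i)) a) = (f ^ i) a := by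
      rw [← Equiv.Perm.mul_apply, ← pow_add, Nat.add_sub_cancel' hij]
      exact hEq.symm
    exact (f ^ i).injective h2
  have noty : ∀ s, my < s → s < p → (f ^ s) a ≠ y := by
    intro s hs1 hs2 hEq
    have := cancel my s hs1.le (by rw [hmyv, hEq])
    exact hpmin (s - my) (by omega) (by omega) this
  have noto : ∀ s, mo < s → s < p → (f ^ s) a ≠ o := by
    intro s hs1 hs2 hEq
    have := cancel mo s hs1.le (by rw [hmov, hEq])
    exact hpmin (s - mo) (by omega) (by omega) this
  have shift : ∀ (i j : ℕ) (x : α), (f ^ j) x = x → (f ^ i) ((f ^ j) a) = (f ^ (i + j)) a := by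
    intro i j x _
    rw [← Equiv.Perm.mul_apply, ← pow_add]
  -- FH1 : from a, first hit is y
  have r1 : (π * f).SameCycle a o := by
    have := walk_reach (f := f) (π := π) my hmy0 hmyv (by
      intro i hi hin
      exact hπfix _ (hpmin i hi (by omega)) (hmymin i hi hin) (hmomin i hi (by omega)))
    rwa [hπy] at this
  -- FH2 : from y, first hit is o
  have r2 : (π * f).SameCycle y a := by
    have hval : (f ^ (mo - my)) y = o := by
      rw [← hmyv, ← Equiv.Perm.mul_apply, ← pow_add, Nat.sub_add_cancel hord.le, hmov]
    have := walk_reach (f := f) (π := π) (mo - my) (by omega) hval (by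
      intro i hi hin
      have hrw : (f ^ i) y = (f ^ (my + i)) a := by
        rw [← hmyv, ← Equiv.Perm.mul_apply, ← pow_add, Nat.add_comm]
      rw [hrw]
      exact hπfix _ (hpmin (my + i) (by omega) (by omega))
        (noty (my + i) (by omega) (by omega)) (hmomin (my + i) (by omega) (by omega)))
    rwa [hπo] at this
  -- FH3 : from o, first hit is a
  have r3 : (π * f).SameCycle o y := by
    have hval : (f ^ (p - mo)) o = a := by
      rw [← hmov, ← Equiv.Perm.mul_apply, ← pow_add, Nat.sub_add_cancel hmop.le, hpv]
    have := walk_reach (f := f) (π := π) (p - mo) (by omega) hval (by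
      intro i hi hin
      have hrw : (f ^ i) o = (f ^ (mo + i)) a := by
        rw [← hmov, ← Equiv.Perm.mul_apply, ← pow_add, Nat.add_comm]
      rw [hrw]
      exact hπfix _ (hpmin (mo + i) (by omega) (by omega))
        (noty (mo + i) (by omega) (by omega)) (noto (mo + i) (by omega) (by omega)))
    rwa [hπa] at this
  have key : ∀ u, f.SameCycle a u → (π * f).SameCycle u a := by
    intro u hu
    obtain ⟨n, hn0, hnv⟩ := exists_pos_pow_eq hu.symm
    obtain ⟨t, ht, hut, hut'⟩ := reach_triple f π a y o u hπfix ⟨n, hn0, Or.inl hnv⟩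
    rcases ht with rfl | rfl | rfl
    · rw [hπa] at hut'
      exact hut'.trans r2
    · rw [hπy] at hut'
      exact hut'.trans (r3.trans r2)
    · rw [hπo] at hut'
      exact hut'
  exact fun u w hu hw => (key u hu).trans (key w hw).symm

lemma min_index [Finite α] (f : Equiv.Perm α) {a t : α} (hne : t ≠ a) (h : f.SameCycle a t)
    {p : ℕ} (hp0 : 0 < p) (hpv : (f ^ p) a = a) :
    ∃ m, 0 < m ∧ (f ^ m) a = t ∧ m < p ∧ ∀ i, 0 < i → i < m → (f ^ i) a ≠ t := by
  classical
  have hex : ∃ n, 0 < n ∧ (f ^ n) a = t := exists_pos_pow_eq h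
  have hspec := Nat.find_spec hex
  set m := Nat.find hex with hm
  have hmin : ∀ i, i < m → ¬(0 < i ∧ (f ^ i) a = t) := fun i => Nat.find_min hex
  have hmp : m < p := by
    by_contra hle
    push_neg at hle
    have hsub : (f ^ (m - p)) a = t := by
      have e1 : (f ^ ((m - p) + p)) a = (f ^ (m - p)) a := by
        rw [pow_add, Equiv.Perm.mul_apply, hpv]
      have e2 : (m - p) + p = m := by omega
      rw [e2] at e1
      rw [← e1]; exact hspec.2
    rcases Nat.eq_zero_or_pos (m - p) with h0 | hpos
    · rw [h0] at hsub; simp at hsub; exact hne hsub.symm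
    · exact hmin (m - p) (by omega) ⟨hpos, hsub⟩
  exact ⟨m, hspec.1, hspec.2, hmp, fun i h1 h2 hEq => hmin i h2 ⟨h1, hEq⟩⟩

lemma exists_good_cycle [Finite α] [DecidableEq α] (f : Equiv.Perm α) (a b z : α)
    (hab : f.SameCycle a b) (haz : f.SameCycle a z)
    (h1 : a ≠ b) (h2 : a ≠ z) (h3 : b ≠ z) :
    ∃ y o : α, ((y = b ∧ o = z) ∨ (y = z ∧ o = b)) ∧
      ∀ u w, f.SameCycle a u → f.SameCycle a w →
        ((Equiv.swap a o * Equiv.swap a y) * f).SameCycle u w := by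
  classical
  have hretex : ∃ n, 0 < n ∧ (f ^ n) a = a :=
    ⟨orderOf f, orderOf_pos f, by simp [pow_orderOf_eq_one]⟩
  have hp := Nat.find_spec hretex
  set p := Nat.find hretex with hpdef
  have hpmin : ∀ i, 0 < i → i < p → (f ^ i) a ≠ a := fun i hi1 hi2 hEq =>
    Nat.find_min hretex hi2 ⟨hi1, hEq⟩
  obtain ⟨mb, hmb0, hmbv, hmbp, hmbmin⟩ := min_index f (Ne.symm h1) hab hp.1 hp.2
  obtain ⟨mz, hmz0, hmzv, hmzp, hmzmin⟩ := min_index f (Ne.symm h2) haz hp.1 hp.2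
  have hmne : mb ≠ mz := fun hEq => h3 (by rw [← hmbv, hEq, hmzv])
  rcases lt_or_gt_of_ne hmne with hlt | hgt
  · exact ⟨b, z, Or.inl ⟨rfl, rfl⟩,
      merge_core f a b z (Ne.symm h1) (Ne.symm h2) h3 hmb0 hmbv hmbmin hmz0 hmzv hmzmin
        hp.1 hp.2 hpmin hmbp hmzp hlt⟩
  · exact ⟨z, b, Or.inr ⟨rfl, rfl⟩,
      merge_core f a z b (Ne.symm h2) (Ne.symm h1) (Ne.symm h3) hmz0 hmzv hmzmin hmb0 hmbv hmbmin
        hp.1 hp.2 hpmin hmzp hmbp hgt⟩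

end PermCore2

section Counting
variable {α : Type*}

private def orbSetoid (f : Equiv.Perm α) : Setoid α :=
  Setoid.mk f.SameCycle
    ⟨fun x => Equiv.Perm.SameCycle.refl f x, fun h => h.symm, fun h h' => h.trans h'⟩

lemma numOrbits_eq (f : Equiv.Perm α) : numOrbits f = Nat.card (Quotient (orbSetoid f)) := rfl

lemma numOrbits_le_of_map [Finite α] (f f' : Equiv.Perm α) (g : α → α)
    (hcompat : ∀ u v, f.SameCycle u v → f'.SameCycle (g u) (g v))
    (hsurj : ∀ w, ∃ x, f'.SameCycle (g x) w) :
    numOrbits f' ≤ numOrbits f := by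
  rw [numOrbits_eq, numOrbits_eq]
  let F : Quotient (orbSetoid f) → Quotient (orbSetoid f') :=
    Quotient.lift (fun u => (Quotient.mk (orbSetoid f') (g u)))
      (fun u v h => Quotient.sound (hcompat u v h))
  have hF : Function.Surjective F := by
    intro q
    induction q using Quotient.ind with
    | _ w =>
      obtain ⟨x, hx⟩ := hsurj w
      exact ⟨Quotient.mk (orbSetoid f) x, Quotient.sound hx⟩
  exact Nat.card_le_card_of_surjective F hF

lemma numOrbits_lt_of_map [Finite α] (f f' : Equiv.Perm α) (g : α → α)
    (hcompat : ∀ u v, f.SameCycle u v → f'.SameCycle (g u) (g v))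
    (hsurj : ∀ w, ∃ x, f'.SameCycle (g x) w)
    (y o : α) (hyo : ¬ f.SameCycle y o) (hgyo : f'.SameCycle (g y) (g o)) :
    numOrbits f' < numOrbits f := by
  refine lt_of_le_of_ne (numOrbits_le_of_map f f' g hcompat hsurj) ?_
  intro hEq
  rw [numOrbits_eq, numOrbits_eq] at hEq
  let F : Quotient (orbSetoid f) → Quotient (orbSetoid f') :=
    Quotient.lift (fun u => (Quotient.mk (orbSetoid f') (g u)))
      (fun u v h => Quotient.sound (hcompat u v h))
  have hF : Function.Surjective F := by
    intro q
    induction q using Quotient.ind with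
    | _ w =>
      obtain ⟨x, hx⟩ := hsurj w
      exact ⟨Quotient.mk (orbSetoid f) x, Quotient.sound hx⟩
  have hbij : Function.Bijective F := by
    rw [Nat.bijective_iff_surjective_and_card]
    exact ⟨hF, hEq.symm⟩
  have himg : F (Quotient.mk (orbSetoid f) y) = F (Quotient.mk (orbSetoid f) o) :=
    Quotient.sound hgyo
  have := hbij.1 himg
  exact hyo (Quotient.exact this)

end Counting

section Cases
variable {α : Type*} [Finite α] [DecidableEq α]

lemma tripleCycle_spec (a y o : α) (hya : y ≠ a) (hoa : o ≠ a) (hyo : y ≠ o) :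
    (Equiv.swap a o * Equiv.swap a y) a = y ∧ (Equiv.swap a o * Equiv.swap a y) y = o ∧
      (Equiv.swap a o * Equiv.swap a y) o = a ∧
      ∀ x, x ≠ a → x ≠ y → x ≠ o → (Equiv.swap a o * Equiv.swap a y) x = x := by
  refine ⟨?_, ?_, ?_, ?_⟩
  · rw [Equiv.Perm.mul_apply, Equiv.swap_apply_left, Equiv.swap_apply_of_ne_of_ne hya hyo]
  · rw [Equiv.Perm.mul_apply, Equiv.swap_apply_right, Equiv.swap_apply_left]
  · rw [Equiv.Perm.mul_apply, Equiv.swap_apply_of_ne_of_ne hoa (Ne.symm hyo),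
      Equiv.swap_apply_right]
  · intro x hxa hxy hxo
    rw [Equiv.Perm.mul_apply, Equiv.swap_apply_of_ne_of_ne hxa hxy,
      Equiv.swap_apply_of_ne_of_ne hxa hxo]

lemma case_merge (f : Equiv.Perm α) (a y o : α) (hne : y ≠ o)
    (hay : ¬ f.SameCycle a y) (hao : ¬ f.SameCycle a o) (hyo : f.SameCycle y o) :
    numOrbits ((Equiv.swap a o * Equiv.swap a y) * f) ≤ numOrbits f ∧
      ∀ u, f.SameCycle a u → ((Equiv.swap a o * Equiv.swap a y) * f).SameCycle u y := by
  classical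
  have hya : y ≠ a := fun h => hay (h ▸ Equiv.Perm.SameCycle.refl f a)
  have hoa : o ≠ a := fun h => hao (h ▸ Equiv.Perm.SameCycle.refl f a)
  obtain ⟨hπa, hπy, hπo, hπfix⟩ := tripleCycle_spec a y o hya hoa hne
  set π := Equiv.swap a o * Equiv.swap a y with hπdef
  set f' := π * f with hf'
  have Mi : ∀ u, f.SameCycle a u → f'.SameCycle u y := by
    intro u hu
    obtain ⟨n, hn0, hnv⟩ := exists_pos_pow_eq hu.symm
    obtain ⟨t, ht, hut, hut'⟩ := reach_triple f π a y o u hπfix ⟨n, hn0, Or.inl hnv⟩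
    rcases ht with rfl | rfl | rfl
    · rwa [hπa] at hut'
    · exact absurd (hu.trans hut) hay
    · exact absurd (hu.trans hut) hao
  have Mii : ∀ u, f.SameCycle y u → f'.SameCycle u o ∨ f'.SameCycle u a := by
    intro u hu
    obtain ⟨n, hn0, hnv⟩ := exists_pos_pow_eq hu.symm
    obtain ⟨t, ht, hut, hut'⟩ := reach_triple f π a y o u hπfix ⟨n, hn0, Or.inr (Or.inl hnv)⟩
    rcases ht with rfl | rfl | rfl
    · exact absurd (hu.trans hut).symm hay
    · left; rwa [hπy] at hut'
    · right; rwa [hπo] at hut'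
  refine ⟨?_, Mi⟩
  set g : α → α := fun u => if f.SameCycle u y then o else u with hg
  have hcompat : ∀ u v, f.SameCycle u v → f'.SameCycle (g u) (g v) := by
    intro u v huv
    by_cases h1 : f.SameCycle u y
    · have h2 : f.SameCycle v y := (huv.symm).trans h1
      simp only [hg, if_pos h1, if_pos h2]
      exact Equiv.Perm.SameCycle.refl _ _
    · have h2 : ¬ f.SameCycle v y := fun h => h1 (huv.trans h)
      simp only [hg, if_neg h1, if_neg h2]
      by_cases h3 : f.SameCycle a u
      · exact (Mi u h3).trans (Mi v (h3.trans huv)).symm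
      · refine sameCycle_mul_of_fixed ?_ huv
        intro w hw
        refine hπfix _ ?_ ?_ ?_
        · rintro rfl; exact h3 hw.symm
        · rintro rfl; exact h1 hw
        · rintro rfl; exact h1 (hw.trans hyo.symm)
  have hsurj : ∀ w, ∃ x, f'.SameCycle (g x) w := by
    intro w
    by_cases h1 : f.SameCycle w y
    · rcases Mii w h1.symm with h | h
      · refine ⟨y, ?_⟩
        simp only [hg, if_pos (Equiv.Perm.SameCycle.refl f y)]
        exact h.symm
      · refine ⟨a, ?_⟩
        simp only [hg, if_neg hay]
        exact h.symm
    · refine ⟨w, ?_⟩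
      simp only [hg, if_neg h1]
      exact Equiv.Perm.SameCycle.refl _ _
  exact numOrbits_le_of_map f f' g hcompat hsurj

lemma case_third (f : Equiv.Perm α) (a y o : α)
    (hay : ¬ f.SameCycle a y) (hao : ¬ f.SameCycle a o) (hyo : ¬ f.SameCycle y o) :
    numOrbits ((Equiv.swap a o * Equiv.swap a y) * f) < numOrbits f := by
  classical
  have hya : y ≠ a := fun h => hay (h ▸ Equiv.Perm.SameCycle.refl f a)
  have hoa : o ≠ a := fun h => hao (h ▸ Equiv.Perm.SameCycle.refl f a)
  have hyone : y ≠ o := fun h => hyo (h ▸ Equiv.Perm.SameCycle.refl f y)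
  obtain ⟨hπa, hπy, hπo, hπfix⟩ := tripleCycle_spec a y o hya hoa hyone
  set π := Equiv.swap a o * Equiv.swap a y with hπdef
  set f' := π * f with hf'
  have Mi : ∀ u, f.SameCycle a u → f'.SameCycle u y := by
    intro u hu
    obtain ⟨n, hn0, hnv⟩ := exists_pos_pow_eq hu.symm
    obtain ⟨t, ht, hut, hut'⟩ := reach_triple f π a y o u hπfix ⟨n, hn0, Or.inl hnv⟩
    rcases ht with rfl | rfl | rfl
    · rwa [hπa] at hut'
    · exact absurd (hu.trans hut) hay
    · exact absurd (hu.trans hut) hao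
  have Mii : ∀ u, f.SameCycle y u → f'.SameCycle u o := by
    intro u hu
    obtain ⟨n, hn0, hnv⟩ := exists_pos_pow_eq hu.symm
    obtain ⟨t, ht, hut, hut'⟩ := reach_triple f π a y o u hπfix ⟨n, hn0, Or.inr (Or.inl hnv)⟩
    rcases ht with rfl | rfl | rfl
    · exact absurd (hu.trans hut).symm hay
    · rwa [hπy] at hut'
    · exact absurd (hu.trans hut) hyo
  have Miii : ∀ u, f.SameCycle o u → f'.SameCycle u a := by
    intro u hu
    obtain ⟨n, hn0, hnv⟩ := exists_pos_pow_eq hu.symm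
    obtain ⟨t, ht, hut, hut'⟩ := reach_triple f π a y o u hπfix ⟨n, hn0, Or.inr (Or.inr hnv)⟩
    rcases ht with rfl | rfl | rfl
    · exact absurd (hu.trans hut).symm hao
    · exact absurd (hu.trans hut).symm hyo
    · rwa [hπo] at hut'
  set g : α → α := fun u => if (f.SameCycle u y ∨ f.SameCycle u o) then a else u with hg
  have hga : g a = a := by
    simp only [hg, if_neg (show ¬ (f.SameCycle a y ∨ f.SameCycle a o) from fun h =>
      h.elim hay hao)]
  have hcompat : ∀ u v, f.SameCycle u v → f'.SameCycle (g u) (g v) := by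
    intro u v huv
    by_cases h1 : f.SameCycle u y ∨ f.SameCycle u o
    · have h2 : f.SameCycle v y ∨ f.SameCycle v o :=
        h1.imp (fun h => (huv.symm).trans h) (fun h => (huv.symm).trans h)
      simp only [hg, if_pos h1, if_pos h2]
      exact Equiv.Perm.SameCycle.refl _ _
    · have h2 : ¬ (f.SameCycle v y ∨ f.SameCycle v o) := fun h =>
        h1 (h.imp (fun h' => huv.trans h') (fun h' => huv.trans h'))
      simp only [hg, if_neg h1, if_neg h2]
      by_cases h3 : f.SameCycle a u
      · exact (Mi u h3).trans (Mi v (h3.trans huv)).symm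
      · refine sameCycle_mul_of_fixed ?_ huv
        intro w hw
        refine hπfix _ ?_ ?_ ?_
        · rintro rfl; exact h3 hw.symm
        · rintro rfl; exact h1 (Or.inl hw)
        · rintro rfl; exact h1 (Or.inr hw)
  have hsurj : ∀ w, ∃ x, f'.SameCycle (g x) w := by
    intro w
    by_cases h1 : f.SameCycle w y
    · have hwo : f'.SameCycle w o := Mii w h1.symm
      have hoa' : f'.SameCycle o a := Miii o (Equiv.Perm.SameCycle.refl f o)
      exact ⟨a, by rw [hga]; exact (hwo.trans hoa').symm⟩
    · by_cases h2 : f.SameCycle w o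
      · have hwa : f'.SameCycle w a := Miii w h2.symm
        exact ⟨a, by rw [hga]; exact hwa.symm⟩
      · refine ⟨w, ?_⟩
        simp only [hg, if_neg (show ¬ (f.SameCycle w y ∨ f.SameCycle w o) from fun h =>
          h.elim h1 h2)]
        exact Equiv.Perm.SameCycle.refl _ _
  have hgy : g y = a := by
    simp only [hg, if_pos (Or.inl (Equiv.Perm.SameCycle.refl f y))]
  have hgo : g o = a := by
    simp only [hg, if_pos (Or.inr (Equiv.Perm.SameCycle.refl f o))]
  refine numOrbits_lt_of_map f f' g hcompat hsurj y o hyo ?_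
  rw [hgy, hgo]

end Cases

open SimpleGraph Equiv Equiv.Perm

section DartBasic
variable {V : Type*} [Fintype V] {G : SimpleGraph V}

instance dartFinite : Finite G.Dart :=
  Finite.of_injective _ (SimpleGraph.Dart.toProd_injective (G := G))

lemma tail_pow {σ : Equiv.Perm G.Dart} (h1 : ∀ d, (σ d).toProd.1 = d.toProd.1) :
    ∀ (n : ℕ) (d : G.Dart), ((σ ^ n) d).toProd.1 = d.toProd.1 := by
  intro n
  induction n with
  | zero => intro d; rfl
  | succ n ih =>
    intro d
    rw [pow_succ', Equiv.Perm.mul_apply]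
    rw [h1 ((σ ^ n) d), ih d]

lemma tail_sameCycle {σ : Equiv.Perm G.Dart} (h1 : ∀ d, (σ d).toProd.1 = d.toProd.1)
    {d d' : G.Dart} (h : σ.SameCycle d d') : d'.toProd.1 = d.toProd.1 := by
  obtain ⟨n, _, hn⟩ := exists_pos_pow_eq h
  rw [← hn]
  exact tail_pow h1 n d

lemma faceTracing_apply (σ : Equiv.Perm G.Dart) (d : G.Dart) :
    faceTracing G σ d = σ d.symm := rfl

lemma faceTracing_mul (σ π : Equiv.Perm G.Dart) :
    faceTracing G (π * σ) = π * faceTracing G σ :=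
  Equiv.ext fun _ => rfl

lemma tail_faceTracing {σ : Equiv.Perm G.Dart} (h1 : ∀ d, (σ d).toProd.1 = d.toProd.1)
    (d : G.Dart) : (faceTracing G σ d).toProd.1 = d.toProd.2 := by
  rw [faceTracing_apply, h1 d.symm]
  rw [SimpleGraph.Dart.symm_toProd]
  rfl

/-- Modifying a rotation system by a valid 3-cycle at a vertex. -/
lemma modified_rotation [DecidableEq G.Dart] (σ : Equiv.Perm G.Dart) (hrot : IsRotationSystem G σ)
    (a b z : G.Dart) (hab : a.toProd.1 = b.toProd.1) (haz : a.toProd.1 = z.toProd.1)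
    (h1 : a ≠ b) (h2 : a ≠ z) (h3 : b ≠ z) :
    ∃ y o : G.Dart, ((y = b ∧ o = z) ∨ (y = z ∧ o = b)) ∧
      IsRotationSystem G ((Equiv.swap a o * Equiv.swap a y) * σ) := by
  classical
  obtain ⟨y, o, hyo, hmerge⟩ :=
    exists_good_cycle σ a b z (hrot.2 a b hab) (hrot.2 a z haz) h1 h2 h3
  have hya : y ≠ a := by rcases hyo with ⟨rfl, rfl⟩ | ⟨rfl, rfl⟩; exacts [h1.symm, h2.symm]
  have hoa : o ≠ a := by rcases hyo with ⟨rfl, rfl⟩ | ⟨rfl, rfl⟩; exacts [h2.symm, h1.symm]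
  have hyone : y ≠ o := by rcases hyo with ⟨rfl, rfl⟩ | ⟨rfl, rfl⟩; exacts [h3, h3.symm]
  have hay' : a.toProd.1 = y.toProd.1 := by
    rcases hyo with ⟨rfl, rfl⟩ | ⟨rfl, rfl⟩; exacts [hab, haz]
  have hao' : a.toProd.1 = o.toProd.1 := by
    rcases hyo with ⟨rfl, rfl⟩ | ⟨rfl, rfl⟩; exacts [haz, hab]
  obtain ⟨hπa, hπy, hπo, hπfix⟩ := tripleCycle_spec a y o hya hoa hyone
  set π := Equiv.swap a o * Equiv.swap a y with hπdef
  have hπtail : ∀ x : G.Dart, (π x).toProd.1 = x.toProd.1 := by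
    intro x
    by_cases hxa : x = a
    · subst hxa; rw [hπa, ← hay']
    by_cases hxy : x = y
    · subst hxy; rw [hπy, ← hao', hay']
    by_cases hxo : x = o
    · subst hxo; rw [hπo, hao']
    · rw [hπfix x hxa hxy hxo]
  refine ⟨y, o, hyo, ⟨?_, ?_⟩⟩
  · intro d
    rw [Equiv.Perm.mul_apply, hπtail, hrot.1]
  · intro d d' hdd'
    by_cases hv : d.toProd.1 = a.toProd.1
    · exact hmerge d d' (hrot.2 a d hv.symm) (hrot.2 a d' (hv.symm.trans hdd'))
    · refine sameCycle_mul_of_fixed ?_ (hrot.2 d d' hdd')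
      intro w hw
      have hwt : w.toProd.1 = d.toProd.1 := tail_sameCycle hrot.1 hw
      refine hπfix _ ?_ ?_ ?_
      · rintro rfl; exact hv hwt.symm
      · rintro rfl; exact hv (hwt.symm.trans hay'.symm)
      · rintro rfl; exact hv (hwt.symm.trans hao'.symm)

end DartBasic

section Existence

def rotFin : (n : ℕ) → Equiv.Perm (Fin n)
  | 0 => 1
  | (_ + 1) => Equiv.addRight 1

open Fin.NatCast in
lemma rotFin_pow_apply (n k : ℕ) (x : Fin (n + 1)) :
    ((rotFin (n + 1)) ^ k) x = x + (k : Fin (n + 1)) := by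
  induction k with
  | zero => simp
  | succ k ih =>
    rw [pow_succ', Equiv.Perm.mul_apply, ih]
    show (x + (k : Fin (n+1))) + 1 = x + ((k : ℕ) + 1 : ℕ)
    rw [Nat.cast_add, Nat.cast_one, add_assoc]

open Fin.NatCast in
lemma rotFin_exists_pow (n : ℕ) (x y : Fin n) : ∃ k : ℕ, ((rotFin n) ^ k) x = y := by
  cases n with
  | zero => exact x.elim0
  | succ n =>
    refine ⟨(y - x).val, ?_⟩
    rw [rotFin_pow_apply]
    have hc : (((y - x).val : ℕ) : Fin (n + 1)) = y - x := Fin.cast_val_eq_self _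
    rw [hc, add_comm x (y - x), sub_add_cancel]

variable {V : Type*} [Fintype V] (G : SimpleGraph V)

lemma exists_rotation : ∃ σ : Equiv.Perm G.Dart, IsRotationSystem G σ := by
  classical
  letI : Fintype G.Dart := Fintype.ofFinite _
  set n : V → ℕ := fun v => Fintype.card {d : G.Dart // d.toProd.1 = v} with hn
  set e : ∀ v, {d : G.Dart // d.toProd.1 = v} ≃ Fin (n v) := fun v => (Fintype.equivFin _)
    with he
  set Pv : ∀ v, Equiv.Perm {d : G.Dart // d.toProd.1 = v} := fun v =>
    ((e v).symm.permCongr (rotFin (n v))) with hPv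
  set E := Equiv.sigmaFiberEquiv (fun d : G.Dart => d.toProd.1) with hE
  set σ : Equiv.Perm G.Dart := E.permCongr (Equiv.sigmaCongrRight Pv) with hσ
  have hfiber : ∀ (v) (s : {d : G.Dart // d.toProd.1 = v}), σ s.val = (Pv v s).val := by
    rintro v ⟨d, hd⟩
    subst hd
    rfl
  have h1 : ∀ d : G.Dart, (σ d).toProd.1 = d.toProd.1 := by
    intro d
    have := hfiber d.toProd.1 ⟨d, rfl⟩
    rw [this]
    exact (Pv d.toProd.1 ⟨d, rfl⟩).2
  have hPvpow : ∀ (v) (k : ℕ) (s : {d : G.Dart // d.toProd.1 = v}),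
      ((Pv v) ^ k) s = (e v).symm (((rotFin (n v)) ^ k) (e v s)) := by
    intro v k
    induction k with
    | zero => intro s; simp
    | succ k ih =>
      intro s
      rw [pow_succ', Equiv.Perm.mul_apply, ih]
      show (Pv v) _ = _
      rw [hPv]
      simp only [Equiv.permCongr_apply, Equiv.symm_symm, Equiv.apply_symm_apply]
      rw [pow_succ', Equiv.Perm.mul_apply]
  have hpow : ∀ (v) (s : {d : G.Dart // d.toProd.1 = v}) (k : ℕ),
      (σ ^ k) s.val = (((Pv v) ^ k) s).val := by
    intro v s k
    induction k with
    | zero => rfl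
    | succ k ih =>
      rw [pow_succ', Equiv.Perm.mul_apply, ih, pow_succ', Equiv.Perm.mul_apply]
      exact hfiber v (((Pv v) ^ k) s)
  refine ⟨σ, h1, ?_⟩
  intro d d' hdd'
  set v := d.toProd.1 with hv
  set s : {x : G.Dart // x.toProd.1 = v} := ⟨d, rfl⟩ with hs
  set s' : {x : G.Dart // x.toProd.1 = v} := ⟨d', hdd'.symm⟩ with hs'
  obtain ⟨k, hk⟩ := rotFin_exists_pow (n v) (e v s) (e v s')
  have : (σ ^ k) d = d' := by
    have h2 := hpow v s k
    rw [hPvpow v k s, hk] at h2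
    simpa using h2
  exact sameCycle_of_natpow this

end Existence

section Conn
variable {V : Type*} [Fintype V] {G : SimpleGraph V}

lemma pow_fixed {α : Type*} {f : Equiv.Perm α} {x : α} (h : f x = x) :
    ∀ k : ℕ, (f ^ k) x = x := by
  intro k
  induction k with
  | zero => rfl
  | succ k ih => rw [pow_succ', Equiv.Perm.mul_apply, ih, h]

lemma exists_dart_of_edge {e : Sym2 V} (he : e ∈ G.edgeSet) : ∃ d : G.Dart, d.edge = e := by
  induction e using Sym2.ind with
  | _ x y => exact ⟨⟨(x, y), (SimpleGraph.mem_edgeSet G).mp he⟩, rfl⟩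

lemma conn_find (σ : Equiv.Perm G.Dart) (hrot : IsRotationSystem G σ) (d₀ : G.Dart)
    {x y : V} (w : G.Walk x y)
    (hx : ∃ a : G.Dart, a.toProd.1 = x ∧ (faceTracing G σ).SameCycle d₀ a) :
    (∃ a : G.Dart, a.toProd.1 = y ∧ (faceTracing G σ).SameCycle d₀ a) ∨
    (∃ a b : G.Dart, a.toProd.1 = b.toProd.1 ∧ (faceTracing G σ).SameCycle d₀ a ∧
      ¬ (faceTracing G σ).SameCycle d₀ b ∧ ¬ (faceTracing G σ).SameCycle d₀ b.symm) := by
  classical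
  induction w with
  | nil => exact Or.inl hx
  | @cons x x' y h p ih =>
    set τ := faceTracing G σ with hτ
    set b : G.Dart := ⟨(x, x'), h⟩ with hb
    by_cases hcov : (τ.SameCycle d₀ b ∨ τ.SameCycle d₀ b.symm)
    · refine ih ?_
      rcases hcov with hc | hc
      · refine ⟨τ b, ?_, hc.trans (sameCycle_of_natpow (n := 1) (by simp))⟩
        rw [tail_faceTracing hrot.1]
      · exact ⟨b.symm, rfl, hc⟩
    · push_neg at hcov
      obtain ⟨a, ha1, ha2⟩ := hx
      exact Or.inr ⟨a, b, by rw [ha1], ha2, hcov.1, hcov.2⟩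

end Conn


/-- Every finite connected simple graph with at least one edge has a rotation system whose
face-tracing permutation has a single orbit containing a dart of every edge, and whose
number of orbits (faces) is minimum over all rotation systems; i.e. the graph has an
edge-outer orientable embedding of maximum orientable genus. -/
theorem edge_outer_embedding_max_genus {V : Type*} [Fintype V] (G : SimpleGraph V)
    (hconn : G.Connected) (hne : G.edgeSet.Nonempty) :
    ∃ σ : Equiv.Perm G.Dart, IsRotationSystem G σ ∧
      (∃ d₀ : G.Dart, ∀ e ∈ G.edgeSet, ∃ d : G.Dart,
        d.edge = e ∧ (faceTracing G σ).SameCycle d₀ d) ∧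
      (∀ σ' : Equiv.Perm G.Dart, IsRotationSystem G σ' →
        numOrbits (faceTracing G σ) ≤ numOrbits (faceTracing G σ')) := by
  classical
  obtain ⟨σ₀, hσ₀⟩ := exists_rotation G
  have hS1ne : (({k | ∃ σ, IsRotationSystem G σ ∧ numOrbits (faceTracing G σ) = k}) :
      Set ℕ).Nonempty := ⟨_, σ₀, hσ₀, rfl⟩
  set m := sInf {k | ∃ σ, IsRotationSystem G σ ∧ numOrbits (faceTracing G σ) = k} with hmdef
  have hmmem := Nat.sInf_mem hS1ne
  have hmmin : ∀ σ', IsRotationSystem G σ' → m ≤ numOrbits (faceTracing G σ') :=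
    fun σ' h => Nat.sInf_le ⟨σ', h, rfl⟩
  set D := Nat.card G.Dart with hD
  set S2 : Set ℕ := {k | ∃ σ d₀, IsRotationSystem G σ ∧ numOrbits (faceTracing G σ) = m ∧
    ({e : Sym2 V | ∃ d : G.Dart, d.edge = e ∧ (faceTracing G σ).SameCycle d₀ d}.ncard * (D + 1)
      + {d : G.Dart | (faceTracing G σ).SameCycle d₀ d}.ncard) = k} with hS2
  obtain ⟨e₀, he₀⟩ := hne
  obtain ⟨σm, hσm, hσmv⟩ := hmmem
  obtain ⟨dany, -⟩ := exists_dart_of_edge he₀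
  have hS2ne : S2.Nonempty := ⟨_, σm, dany, hσm, hσmv, rfl⟩
  have hS2bdd : BddAbove S2 := by
    refine ⟨Nat.card (Sym2 V) * (D + 1) + D, ?_⟩
    rintro k ⟨σ, d₀, -, -, rfl⟩
    have hc : {e : Sym2 V | ∃ d : G.Dart, d.edge = e ∧ (faceTracing G σ).SameCycle d₀ d}.ncard
        ≤ Nat.card (Sym2 V) := by
      rw [← Set.ncard_univ]
      exact Set.ncard_le_ncard (Set.subset_univ _) (Set.toFinite _)
    have ho : {d : G.Dart | (faceTracing G σ).SameCycle d₀ d}.ncard ≤ D := by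
      rw [hD, ← Set.ncard_univ]
      exact Set.ncard_le_ncard (Set.subset_univ _) (Set.toFinite _)
    exact Nat.add_le_add (Nat.mul_le_mul_right _ hc) ho
  have hS2max := Nat.sSup_mem hS2ne hS2bdd
  obtain ⟨σ, d₀, hrot, hmin, hΦval⟩ := hS2max
  have hΦle : ∀ σ' d₀', IsRotationSystem G σ' → numOrbits (faceTracing G σ') = m →
      ({e : Sym2 V | ∃ d : G.Dart, d.edge = e ∧ (faceTracing G σ').SameCycle d₀' d}.ncard
          * (D + 1) + {d : G.Dart | (faceTracing G σ').SameCycle d₀' d}.ncard)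
        ≤ ({e : Sym2 V | ∃ d : G.Dart, d.edge = e ∧ (faceTracing G σ).SameCycle d₀ d}.ncard
          * (D + 1) + {d : G.Dart | (faceTracing G σ).SameCycle d₀ d}.ncard) := by
    intro σ' d₀' h1 h2
    rw [hΦval]
    exact le_csSup hS2bdd ⟨σ', d₀', h1, h2, rfl⟩
  have hcover : ∀ e ∈ G.edgeSet, ∃ d : G.Dart,
      d.edge = e ∧ (faceTracing G σ).SameCycle d₀ d := by
    by_contra hcon
    push_neg at hcon
    obtain ⟨e₁, he₁, hunc⟩ := hcon
    obtain ⟨db, hdb⟩ := exists_dart_of_edge he₁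
    have hdbu : ¬ (faceTracing G σ).SameCycle d₀ db := hunc db hdb
    have hdbu' : ¬ (faceTracing G σ).SameCycle d₀ db.symm :=
      hunc db.symm (by rw [SimpleGraph.Dart.edge_symm, hdb])
    obtain ⟨w⟩ := hconn.preconnected d₀.toProd.1 db.toProd.1
    have hstart : ∃ a : G.Dart, a.toProd.1 = d₀.toProd.1 ∧ (faceTracing G σ).SameCycle d₀ a :=
      ⟨d₀, rfl, Equiv.Perm.SameCycle.refl _ d₀⟩
    have hfound : ∃ a b : G.Dart, a.toProd.1 = b.toProd.1 ∧ (faceTracing G σ).SameCycle d₀ a ∧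
        ¬ (faceTracing G σ).SameCycle d₀ b ∧ ¬ (faceTracing G σ).SameCycle d₀ b.symm := by
      rcases conn_find σ hrot d₀ w hstart with ⟨a, ha1, ha2⟩ | hgood
      · exact ⟨a, db, by rw [ha1], ha2, hdbu, hdbu'⟩
      · exact hgood
    obtain ⟨a, b, htail, hcova, huncb, huncb'⟩ := hfound
    have had : (faceTracing G σ).SameCycle a d₀ := hcova.symm
    have hanb : ¬ (faceTracing G σ).SameCycle a b := fun h => huncb (hcova.trans h)
    have haneb : a ≠ b := fun h => huncb (h ▸ hcova)
    by_cases hC1 : ∃ z : G.Dart, z.toProd.1 = a.toProd.1 ∧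
        ¬ (faceTracing G σ).SameCycle a z ∧ ¬ (faceTracing G σ).SameCycle b z
    · obtain ⟨z, hz1, hz2, hz3⟩ := hC1
      have hanez : a ≠ z := fun h => hz2 (by rw [h])
      have hbnez : b ≠ z := fun h => hz3 (by rw [h])
      obtain ⟨y, o, hyo, hrot'⟩ := modified_rotation σ hrot a b z htail hz1.symm haneb hanez hbnez
      have hface : faceTracing G ((Equiv.swap a o * Equiv.swap a y) * σ)
          = (Equiv.swap a o * Equiv.swap a y) * faceTracing G σ := faceTracing_mul σ _
      have hlt : numOrbits ((Equiv.swap a o * Equiv.swap a y) * faceTracing G σ)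
          < numOrbits (faceTracing G σ) := by
        refine case_third (faceTracing G σ) a y o ?_ ?_ ?_
        · rcases hyo with ⟨rfl, rfl⟩ | ⟨rfl, rfl⟩; exacts [hanb, hz2]
        · rcases hyo with ⟨rfl, rfl⟩ | ⟨rfl, rfl⟩; exacts [hz2, hanb]
        · rcases hyo with ⟨rfl, rfl⟩ | ⟨rfl, rfl⟩; exacts [hz3, fun h => hz3 h.symm]
      have hge := hmmin _ hrot'
      rw [hface] at hge
      have := hmin
      omega
    · by_cases hC2 : ∃ z : G.Dart, z.toProd.1 = a.toProd.1 ∧ z ≠ b ∧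
          (faceTracing G σ).SameCycle b z
      · obtain ⟨z, hz1, hz2, hz3⟩ := hC2
        have hanz : ¬ (faceTracing G σ).SameCycle a z := fun h => hanb (h.trans hz3.symm)
        have hanez : a ≠ z := fun h => hanz (by rw [h])
        obtain ⟨y, o, hyo, hrot'⟩ :=
          modified_rotation σ hrot a b z htail hz1.symm haneb hanez (fun h => hz2 h.symm)
        have hface : faceTracing G ((Equiv.swap a o * Equiv.swap a y) * σ)
            = (Equiv.swap a o * Equiv.swap a y) * faceTracing G σ := faceTracing_mul σ _
        obtain ⟨hle, hMi⟩ := case_merge (faceTracing G σ) a y o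
          (by rcases hyo with ⟨rfl, rfl⟩ | ⟨rfl, rfl⟩; exacts [fun h => hz2 h.symm, hz2])
          (by rcases hyo with ⟨rfl, rfl⟩ | ⟨rfl, rfl⟩; exacts [hanb, hanz])
          (by rcases hyo with ⟨rfl, rfl⟩ | ⟨rfl, rfl⟩; exacts [hanz, hanb])
          (by rcases hyo with ⟨rfl, rfl⟩ | ⟨rfl, rfl⟩; exacts [hz3, hz3.symm])
        have hm' : numOrbits (faceTracing G ((Equiv.swap a o * Equiv.swap a y) * σ)) = m := by
          rw [hface]
          refine le_antisymm ?_ ?_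
          · rw [← hmin]; exact hle
          · have := hmmin _ hrot'; rwa [hface] at this
        have hdny : ¬ (faceTracing G σ).SameCycle d₀ y := by
          rcases hyo with ⟨rfl, rfl⟩ | ⟨rfl, rfl⟩
          · exact huncb
          · exact fun h => huncb (h.trans hz3.symm)
        have hcovsub : {e : Sym2 V | ∃ d : G.Dart, d.edge = e ∧
            (faceTracing G σ).SameCycle d₀ d} ⊆ {e : Sym2 V | ∃ d : G.Dart, d.edge = e ∧
            (faceTracing G ((Equiv.swap a o * Equiv.swap a y) * σ)).SameCycle y d} := by
          rintro e ⟨d, hd1, hd2⟩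
          refine ⟨d, hd1, ?_⟩
          rw [hface]
          exact (hMi d (had.trans hd2)).symm
        have horbsub : insert y {d : G.Dart | (faceTracing G σ).SameCycle d₀ d} ⊆
            {d : G.Dart | (faceTracing G ((Equiv.swap a o * Equiv.swap a y) * σ)).SameCycle y d}
            := by
          rintro d hd
          rcases hd with rfl | hd
          · rw [Set.mem_setOf_eq, hface]
          · rw [Set.mem_setOf_eq, hface]
            exact (hMi d (had.trans hd)).symm
        have hdny' : y ∉ {d : G.Dart | (faceTracing G σ).SameCycle d₀ d} := hdny
        have hc1 := Set.ncard_le_ncard hcovsub (Set.toFinite _)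
        have ho1 := Set.ncard_le_ncard horbsub (Set.toFinite _)
        rw [Set.ncard_insert_of_notMem hdny' (Set.toFinite _)] at ho1
        have hkey := hΦle _ y hrot' hm'
        have hmul := Nat.mul_le_mul_right (D + 1) hc1
        omega
      · push_neg at hC1 hC2
        have hwt : (σ b).toProd.1 = a.toProd.1 := by rw [hrot.1 b, ← htail]
        have hwnb : σ b ≠ b := by
          intro hEq
          have hsc := hrot.2 b a htail.symm
          obtain ⟨k, hk0, hkv⟩ := exists_pos_pow_eq hsc
          rw [pow_fixed hEq k] at hkv
          exact haneb hkv.symm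
        have hwb : ¬ (faceTracing G σ).SameCycle b (σ b) := hC2 (σ b) hwt hwnb
        have hwa : (faceTracing G σ).SameCycle a (σ b) := by
          by_contra hna
          exact hwb (hC1 (σ b) hwt hna)
        have hbw : (faceTracing G σ).SameCycle b.symm (σ b) := by
          refine sameCycle_of_natpow (n := 1) ?_
          rw [pow_one, faceTracing_apply, SimpleGraph.Dart.symm_symm]
        exact huncb' (hcova.trans (hwa.trans hbw.symm))
  exact ⟨σ, hrot, ⟨d₀, hcover⟩, fun σ'' h'' => by rw [hmin]; exact hmmin σ'' h''⟩
end

section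
/- Let G be a finite 3-regular simple graph. A closed walk W in G is a reporter strand walk (i.e., W uses every edge of G at least once and W is a facial walk of some rotation system on G) if and only if W uses every edge at least once, W uses each dart at most once (i.e., W is orientable: each edge is used at most once in each direction), and W is retraction-free (no dart of W is immediately followed, cyclically, by its reverse). -/
open SimpleGraph

/-- A closed walk `w` is a facial walk of the rotation system `σ`: its darts are pairwise
distinct and the face-tracing permutation sends each dart of `w` to the (cyclically) next
dart of `w`. -/
def IsFacialWalk {V : Type*} {G : SimpleGraph V} (σ : Equiv.Perm G.Dart) {v : V}
    (w : G.Walk v v) : Prop :=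
  w.darts.Nodup ∧
    ∀ i : Fin w.darts.length,
      faceTracing G σ (w.darts.get i) =
        w.darts.get ⟨((i : ℕ) + 1) % w.darts.length, Nat.mod_lt _ i.pos⟩

/-- A closed walk is retraction-free: no dart in its cyclic dart sequence is immediately
followed by its reverse. -/
def RetractionFree {V : Type*} {G : SimpleGraph V} {v : V} (w : G.Walk v v) : Prop :=
  ∀ i : Fin w.darts.length,
    w.darts.get ⟨((i : ℕ) + 1) % w.darts.length, Nat.mod_lt _ i.pos⟩ ≠ (w.darts.get i).symm

/-- A walk uses every edge of the graph at least once. -/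
def EdgeSpanning {V : Type*} {G : SimpleGraph V} {u v : V} (w : G.Walk u v) : Prop :=
  ∀ e ∈ G.edgeSet, e ∈ w.edges


set_option maxHeartbeats 1000000 in
private lemma triple_lemma {D : Type*} (R : D → D → Prop) (a b c : D)
    (hab : a ≠ b) (hac : a ≠ c) (hbc : b ≠ c)
    (fn : ∀ x y y', R x y → R x y' → y = y')
    (inj : ∀ x x' y, R x y → R x' y → x = x')
    (irr : ∀ x, ¬ R x x)
    (mem : ∀ x y, R x y → (x = a ∨ x = b ∨ x = c) ∧ (y = a ∨ y = b ∨ y = c))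
    (cov : ∀ x, x = a ∨ x = b ∨ x = c → (∃ y, R x y) ∨ (∃ y, R y x)) :
    (∀ x y, R x y → (x = a ∧ y = b) ∨ (x = b ∧ y = c) ∨ (x = c ∧ y = a)) ∨
      (∀ x y, R x y → (x = a ∧ y = c) ∨ (x = c ∧ y = b) ∨ (x = b ∧ y = a)) := by
  have notrans : ∀ x y z : D, x ≠ z → y ≠ z →
      ((∃ t, R z t) ∨ (∃ t, R t z)) →
      (∀ w t, R w t → (w = x ∨ w = y ∨ w = z) ∧ (t = x ∨ t = y ∨ t = z)) →
      R x y → R y x → False := by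
    intro x y z hxz hyz covz memz h1 h2
    rcases covz with ⟨t, ht⟩ | ⟨t, ht⟩
    · rcases (memz z t ht).2 with rfl | rfl | rfl
      · exact hyz (inj _ _ _ h2 ht)
      · exact hxz (inj _ _ _ h1 ht)
      · exact irr _ ht
    · rcases (memz t z ht).1 with rfl | rfl | rfl
      · exact hyz (fn _ _ _ h1 ht)
      · exact hxz (fn _ _ _ h2 ht)
      · exact irr _ ht
  have pairmem : ∀ x y, R x y →
      ((x = a ∧ y = b) ∨ (x = b ∧ y = c) ∨ (x = c ∧ y = a)) ∨
      ((x = a ∧ y = c) ∨ (x = c ∧ y = b) ∨ (x = b ∧ y = a)) := by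
    intro x y h
    obtain ⟨hx, hy⟩ := mem x y h
    have hne : x ≠ y := fun e => irr x (by rwa [← e] at h)
    rcases hx with rfl | rfl | rfl <;> rcases hy with rfl | rfl | rfl <;>
      first
        | exact (hne rfl).elim
        | exact Or.inl (Or.inl ⟨rfl, rfl⟩)
        | exact Or.inl (Or.inr (Or.inl ⟨rfl, rfl⟩))
        | exact Or.inl (Or.inr (Or.inr ⟨rfl, rfl⟩))
        | exact Or.inr (Or.inl ⟨rfl, rfl⟩)
        | exact Or.inr (Or.inr (Or.inl ⟨rfl, rfl⟩))
        | exact Or.inr (Or.inr (Or.inr ⟨rfl, rfl⟩))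
  have incompat : ∀ x1 y1 x2 y2, R x1 y1 → R x2 y2 →
      ((x1 = a ∧ y1 = b) ∨ (x1 = b ∧ y1 = c) ∨ (x1 = c ∧ y1 = a)) →
      ((x2 = a ∧ y2 = c) ∨ (x2 = c ∧ y2 = b) ∨ (x2 = b ∧ y2 = a)) → False := by
    intro x1 y1 x2 y2 h1 h2 m1 m2
    have memadj : ∀ (p q r : D), ((p = a ∧ q = b ∧ r = c) ∨ (p = b ∧ q = c ∧ r = a) ∨
        (p = a ∧ q = c ∧ r = b)) →
        ∀ w t, R w t → (w = p ∨ w = q ∨ w = r) ∧ (t = p ∨ t = q ∨ t = r) := by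
      intro p q r hpqr w t h
      obtain ⟨hw, ht⟩ := mem w t h
      rcases hpqr with ⟨rfl, rfl, rfl⟩ | ⟨rfl, rfl, rfl⟩ | ⟨rfl, rfl, rfl⟩ <;>
        exact ⟨by rcases hw with rfl | rfl | rfl <;> simp,
          by rcases ht with rfl | rfl | rfl <;> simp⟩
    rcases m1 with ⟨e1, e2⟩ | ⟨e1, e2⟩ | ⟨e1, e2⟩ <;>
        rcases m2 with ⟨f1, f2⟩ | ⟨f1, f2⟩ | ⟨f1, f2⟩ <;>
        rw [e1, e2] at h1 <;> rw [f1, f2] at h2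
    · exact hbc (fn _ _ _ h1 h2)
    · exact hac (inj _ _ _ h1 h2)
    · exact notrans a b c hac hbc (cov c (by tauto))
        (memadj a b c (by tauto)) h1 h2
    · exact hab (inj _ _ _ h2 h1)
    · exact notrans b c a (Ne.symm hab) (Ne.symm hac) (cov a (by tauto))
        (memadj b c a (by tauto)) h1 h2
    · exact hac (fn _ _ _ h2 h1)
    · exact notrans a c b hab (Ne.symm hbc) (cov b (by tauto))
        (memadj a c b (by tauto)) h2 h1
    · exact hab (fn _ _ _ h1 h2)
    · exact hbc ((inj _ _ _ h1 h2).symm)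
  by_cases h : ∃ x y, R x y ∧ ((x = a ∧ y = c) ∨ (x = c ∧ y = b) ∨ (x = b ∧ y = a))
  · obtain ⟨x2, y2, h2, m2⟩ := h
    right
    intro x y hxy
    rcases pairmem x y hxy with m1 | m1
    · exact (incompat x y x2 y2 hxy h2 m1 m2).elim
    · exact m1
  · left
    intro x y hxy
    rcases pairmem x y hxy with m1 | m1
    · exact m1
    · exact (h ⟨x, y, hxy, m1⟩).elim

private lemma cyc3_exists {D : Type*} [DecidableEq D] (a b c : D)
    (hab : a ≠ b) (hac : a ≠ c) (hbc : b ≠ c) :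
    ∃ g : D → D, g a = b ∧ g b = c ∧ g c = a := by
  refine ⟨fun x => if x = a then b else if x = b then c else if x = c then a else x, ?_, ?_, ?_⟩
  · simp
  · simp [Ne.symm hab]
  · simp [Ne.symm hac, Ne.symm hbc]

private lemma glue_props {D : Type*} (a b c : D)
    (g : D → D) (ha : g a = b) (hb : g b = c) (hc : g c = a) :
    (∀ x, (x = a ∨ x = b ∨ x = c) → (g x = a ∨ g x = b ∨ g x = c)) ∧
    (∀ x, (x = a ∨ x = b ∨ x = c) → g (g (g x)) = x) ∧
    (∀ x y, (x = a ∨ x = b ∨ x = c) → (y = a ∨ y = b ∨ y = c) →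
      y = x ∨ y = g x ∨ y = g (g x)) := by
  refine ⟨?_, ?_, ?_⟩
  · intro x hx; rcases hx with rfl | rfl | rfl <;> simp [ha, hb, hc]
  · intro x hx; rcases hx with rfl | rfl | rfl <;> simp [ha, hb, hc]
  · intro x y hx hy; rcases hx with rfl | rfl | rfl <;> rcases hy with rfl | rfl | rfl <;>
      simp [ha, hb, hc]

/-- In a finite 3-regular simple graph, a closed walk is a reporter strand walk (an
edge-spanning facial walk of some rotation system) iff it is edge-spanning, uses each dart
at most once, and is retraction-free. -/
theorem reporter_strand_iff_cubic {V : Type*} [Fintype V]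
    (G : SimpleGraph V) (hcubic : ∀ v : V, (G.neighborSet v).ncard = 3)
    (v : V) (W : G.Walk v v) :
    (EdgeSpanning W ∧ ∃ σ : Equiv.Perm G.Dart, IsRotationSystem G σ ∧ IsFacialWalk σ W) ↔
      (EdgeSpanning W ∧ W.darts.Nodup ∧ RetractionFree W) := by
  classical
  have hdarts : ∀ u : V, ∃ a b c : G.Dart,
      a.toProd.1 = u ∧ b.toProd.1 = u ∧ c.toProd.1 = u ∧ a ≠ b ∧ a ≠ c ∧ b ≠ c ∧
      ∀ x : G.Dart, x.toProd.1 = u → x = a ∨ x = b ∨ x = c := by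
    intro u
    obtain ⟨p, q, r, hpq, hpr, hqr, hset⟩ := Set.ncard_eq_three.mp (hcubic u)
    have hp : G.Adj u p := by
      have : p ∈ G.neighborSet u := by rw [hset]; simp
      exact this
    have hq : G.Adj u q := by
      have : q ∈ G.neighborSet u := by rw [hset]; simp
      exact this
    have hr : G.Adj u r := by
      have : r ∈ G.neighborSet u := by rw [hset]; simp
      exact this
    refine ⟨⟨(u, p), hp⟩, ⟨(u, q), hq⟩, ⟨(u, r), hr⟩, rfl, rfl, rfl, ?_, ?_, ?_, ?_⟩
    · intro h; exact hpq (congrArg (fun d : G.Dart => d.toProd.2) h)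
    · intro h; exact hpr (congrArg (fun d : G.Dart => d.toProd.2) h)
    · intro h; exact hqr (congrArg (fun d : G.Dart => d.toProd.2) h)
    · intro x hx
      have hadj : G.Adj u x.toProd.2 := by rw [← hx]; exact x.adj
      have hmem : x.toProd.2 ∈ G.neighborSet u := hadj
      rw [hset] at hmem
      simp only [Set.mem_insert_iff, Set.mem_singleton_iff] at hmem
      rcases hmem with h | h | h
      · exact Or.inl (Dart.ext _ _ (Prod.ext hx h))
      · exact Or.inr (Or.inl (Dart.ext _ _ (Prod.ext hx h)))
      · exact Or.inr (Or.inr (Dart.ext _ _ (Prod.ext hx h)))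
  constructor
  · rintro ⟨hspan, σ, ⟨hσ1, hσ2⟩, hnodup, hfac⟩
    refine ⟨hspan, hnodup, ?_⟩
    intro i heq
    have hfix0 : faceTracing G σ (W.darts.get i) = (W.darts.get i).symm := by
      rw [← heq]; exact hfac i
    have hfix : σ ((W.darts.get i).symm) = (W.darts.get i).symm := hfix0
    obtain ⟨a, b, c, ha, hb, hc, hab, hac, hbc, htr⟩ :=
      hdarts ((W.darts.get i).symm).toProd.1
    have hex : ∃ y : G.Dart, y.toProd.1 = ((W.darts.get i).symm).toProd.1 ∧
        y ≠ (W.darts.get i).symm := by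
      rcases htr ((W.darts.get i).symm) rfl with hx | hx | hx
      · exact ⟨b, hb, by rw [hx]; exact Ne.symm hab⟩
      · exact ⟨a, ha, by rw [hx]; exact hab⟩
      · exact ⟨a, ha, by rw [hx]; exact hac⟩
    obtain ⟨y, hy1, hy2⟩ := hex
    obtain ⟨k, hk⟩ := hσ2 ((W.darts.get i).symm) y hy1.symm
    rw [Equiv.Perm.zpow_apply_eq_self_of_apply_eq_self hfix k] at hk
    exact hy2 hk.symm
  · rintro ⟨hspan, hnodup, hret⟩
    refine ⟨hspan, ?_⟩
    set nxt : Fin W.darts.length → Fin W.darts.length :=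
      fun i => ⟨((i : ℕ) + 1) % W.darts.length, Nat.mod_lt _ i.pos⟩ with hnxtdef
    have hget_inj : ∀ i j : Fin W.darts.length, W.darts.get i = W.darts.get j → i = j :=
      fun i j h => hnodup.get_inj_iff.mp h
    have hmod : ∀ i : Fin W.darts.length,
        ((i : ℕ) + 1) % W.darts.length =
          if (i : ℕ) + 1 = W.darts.length then 0 else (i : ℕ) + 1 := by
      intro i
      split
      · rename_i h; rw [h, Nat.mod_self]
      · rename_i h; exact Nat.mod_eq_of_lt (Nat.lt_of_le_of_ne i.isLt h)
    have hnxt_inj : ∀ i j : Fin W.darts.length, nxt i = nxt j → i = j := by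
      intro i j h
      have h' := congrArg Fin.val h
      simp only [hnxtdef] at h'
      rw [hmod i, hmod j] at h'
      have hi := i.isLt
      have hj := j.isLt
      apply Fin.ext
      split_ifs at h' <;> omega
    have hsurj : ∀ i : Fin W.darts.length, ∃ j, nxt j = i := by
      intro i
      rcases Nat.eq_zero_or_pos (i : ℕ) with h0 | hpos
      · refine ⟨⟨W.darts.length - 1, by have := i.pos; omega⟩, ?_⟩
        apply Fin.ext
        show (W.darts.length - 1 + 1) % W.darts.length = (i : ℕ)
        rw [Nat.sub_add_cancel i.pos, Nat.mod_self, h0]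
      · refine ⟨⟨(i : ℕ) - 1, by have := i.isLt; omega⟩, ?_⟩
        apply Fin.ext
        show ((i : ℕ) - 1 + 1) % W.darts.length = (i : ℕ)
        rw [Nat.sub_add_cancel hpos, Nat.mod_eq_of_lt i.isLt]
    have hchain : ∀ i : Fin W.darts.length,
        (W.darts.get (nxt i)).toProd.1 = (W.darts.get i).toProd.2 := by
      intro i
      by_cases h : (i : ℕ) + 1 = W.darts.length
      · have hne : W.darts ≠ [] := List.ne_nil_of_length_pos i.pos
        have hv : ((i : ℕ) + 1) % W.darts.length = 0 := by rw [hmod i, if_pos h]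
        have h1 : W.darts.get (nxt i) = W.darts.head hne := by
          rw [List.get_eq_getElem, List.head_eq_getElem_zero hne]
          congr 1
        have h2 : W.darts.get i = W.darts.getLast hne := by
          rw [List.get_eq_getElem, List.getLast_eq_getElem]
          congr 1
          omega
        rw [h1, h2]
        have e1 : (W.darts.head hne).toProd.1 = v := by rw [W.head_darts_eq_firstDart hne]; rfl
        have e2 : (W.darts.getLast hne).toProd.2 = v := by rw [W.getLast_darts_eq_lastDart hne]; rfl
        rw [e1, e2]
      · have hlt : (i : ℕ) + 1 < W.darts.length := Nat.lt_of_le_of_ne i.isLt h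
        have hda := List.isChain_iff_getElem.mp W.isChain_dartAdj_darts (i : ℕ) hlt
        have hv : ((i : ℕ) + 1) % W.darts.length = (i : ℕ) + 1 := by rw [hmod i, if_neg h]
        have hnx : nxt i = ⟨(i : ℕ) + 1, hlt⟩ := Fin.ext hv
        rw [hnx]
        exact hda.symm
    set R : G.Dart → G.Dart → Prop := fun x y =>
      ∃ i : Fin W.darts.length, W.darts.get i = x.symm ∧ W.darts.get (nxt i) = y with hRdef
    have hfn : ∀ x y y', R x y → R x y' → y = y' := by
      rintro x y y' ⟨i, hi1, hi2⟩ ⟨j, hj1, hj2⟩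
      have hij : i = j := hget_inj i j (hi1.trans hj1.symm)
      subst hij
      rw [← hi2, ← hj2]
    have hinj : ∀ x x' y, R x y → R x' y → x = x' := by
      rintro x x' y ⟨i, hi1, hi2⟩ ⟨j, hj1, hj2⟩
      have hij : i = j := hnxt_inj _ _ (hget_inj _ _ (hi2.trans hj2.symm))
      subst hij
      have h2 : x.symm = x'.symm := hi1.symm.trans hj1
      have h3 := congrArg Dart.symm h2
      simpa using h3
    have hirr : ∀ x, ¬ R x x := by
      rintro x ⟨i, hi1, hi2⟩
      apply hret i
      show W.darts.get (nxt i) = (W.darts.get i).symm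
      rw [hi2, hi1, Dart.symm_symm]
    have hfst : ∀ x y, R x y → x.toProd.1 = y.toProd.1 := by
      rintro x y ⟨i, hi1, hi2⟩
      have h1 := hchain i
      rw [hi1, hi2] at h1
      exact h1.symm
    have hcov0 : ∀ x : G.Dart, ∃ i : Fin W.darts.length,
        W.darts.get i = x ∨ W.darts.get i = x.symm := by
      intro x
      have hmem : x.edge ∈ W.darts.map Dart.edge := hspan x.edge x.edge_mem
      obtain ⟨dd, hdd, hedge⟩ := List.mem_map.mp hmem
      obtain ⟨i, hi⟩ := List.mem_iff_get.mp hdd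
      rcases (dart_edge_eq_iff dd x).mp hedge with h | h
      · exact ⟨i, Or.inl (hi.trans h)⟩
      · exact ⟨i, Or.inr (hi.trans h)⟩
    have hcov : ∀ x : G.Dart, (∃ y, R x y) ∨ (∃ y, R y x) := by
      intro x
      obtain ⟨i, hi | hi⟩ := hcov0 x
      · obtain ⟨j, hj⟩ := hsurj i
        right
        refine ⟨(W.darts.get j).symm, j, (Dart.symm_symm _).symm, ?_⟩
        rw [hj]; exact hi
      · left
        exact ⟨W.darts.get (nxt i), i, hi, rfl⟩
    have hP : ∀ u : V, ∃ g : G.Dart → G.Dart,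
        (∀ x : G.Dart, x.toProd.1 = u → (g x).toProd.1 = u) ∧
        (∀ x : G.Dart, x.toProd.1 = u → g (g (g x)) = x) ∧
        (∀ x y : G.Dart, x.toProd.1 = u → y.toProd.1 = u → y = x ∨ y = g x ∨ y = g (g x)) ∧
        (∀ x y : G.Dart, R x y → x.toProd.1 = u → g x = y) := by
      intro u
      obtain ⟨a, b, c, ha, hb, hc, hab, hac, hbc, htr⟩ := hdarts u
      have tl := triple_lemma (fun x y => R x y ∧ x.toProd.1 = u) a b c hab hac hbc
        (fun x y y' h h' => hfn x y y' h.1 h'.1)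
        (fun x x' y h h' => hinj x x' y h.1 h'.1)
        (fun x h => hirr x h.1)
        (fun x y h => ⟨htr x h.2, htr y ((hfst x y h.1).symm.trans h.2)⟩)
        (fun x hx => by
          have hxu : x.toProd.1 = u := by
            rcases hx with rfl | rfl | rfl
            exacts [ha, hb, hc]
          rcases hcov x with ⟨y, hy⟩ | ⟨y, hy⟩
          · exact Or.inl ⟨y, hy, hxu⟩
          · exact Or.inr ⟨y, hy, (hfst y x hy).trans hxu⟩)
      rcases tl with hcase | hcase
      · obtain ⟨g, ga, gb, gc⟩ := cyc3_exists a b c hab hac hbc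
        obtain ⟨p1, p2, p3⟩ := glue_props a b c g ga gb gc
        refine ⟨g, ?_, ?_, ?_, ?_⟩
        · intro x hx
          rcases p1 x (htr x hx) with h | h | h <;> rw [h]
          exacts [ha, hb, hc]
        · intro x hx; exact p2 x (htr x hx)
        · intro x y hx hy; exact p3 x y (htr x hx) (htr y hy)
        · intro x y hR hx
          rcases hcase x y ⟨hR, hx⟩ with ⟨e1, e2⟩ | ⟨e1, e2⟩ | ⟨e1, e2⟩ <;> rw [e1, e2]
          exacts [ga, gb, gc]
      · obtain ⟨g, ga, gc, gb⟩ := cyc3_exists a c b hac hab (fun h => hbc h.symm)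
        obtain ⟨p1, p2, p3⟩ := glue_props a c b g ga gc gb
        have htr' : ∀ x : G.Dart, x.toProd.1 = u → x = a ∨ x = c ∨ x = b := by
          intro x hx
          rcases htr x hx with h | h | h
          exacts [Or.inl h, Or.inr (Or.inr h), Or.inr (Or.inl h)]
        refine ⟨g, ?_, ?_, ?_, ?_⟩
        · intro x hx
          rcases p1 x (htr' x hx) with h | h | h <;> rw [h]
          exacts [ha, hc, hb]
        · intro x hx; exact p2 x (htr' x hx)
        · intro x y hx hy; exact p3 x y (htr' x hx) (htr' y hy)
        · intro x y hR hx
          rcases hcase x y ⟨hR, hx⟩ with ⟨e1, e2⟩ | ⟨e1, e2⟩ | ⟨e1, e2⟩ <;> rw [e1, e2]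
          exacts [ga, gc, gb]
    choose g hg1 hg2 hg3 hg4 using hP
    set F : G.Dart → G.Dart := fun x => g x.toProd.1 x with hFdef
    have hFfst : ∀ x : G.Dart, (F x).toProd.1 = x.toProd.1 := fun x => hg1 _ x rfl
    have hF3 : ∀ x : G.Dart, F (F (F x)) = x := by
      intro x
      have e1 : (F x).toProd.1 = x.toProd.1 := hFfst x
      have e2 : (F (F x)).toProd.1 = x.toProd.1 := (hFfst _).trans e1
      show g (F (F x)).toProd.1 (F (F x)) = x
      rw [e2]
      show g x.toProd.1 (g (F x).toProd.1 (F x)) = x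
      rw [e1]
      exact hg2 _ x rfl
    refine ⟨⟨F, F ∘ F, fun x => hF3 x, fun x => hF3 x⟩, ⟨?_, ?_⟩, hnodup, ?_⟩
    · intro d
      exact hFfst d
    · intro x y hxy
      rcases hg3 x.toProd.1 x y rfl hxy.symm with h | h | h
      · rw [h]
      · refine ⟨1, ?_⟩
        rw [zpow_one]
        exact h.symm
      · refine ⟨2, ?_⟩
        have h2 : ((⟨F, F ∘ F, fun x => hF3 x, fun x => hF3 x⟩ : Equiv.Perm G.Dart) ^ (2 : ℤ)) x =
            F (F x) := by
          rw [show (2 : ℤ) = 1 + 1 from rfl, zpow_add, zpow_one, Equiv.Perm.mul_apply]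
          rfl
        rw [h2]
        show g (F x).toProd.1 (F x) = y
        rw [hFfst x]
        exact h.symm
    · intro i
      have hR : R ((W.darts.get i).symm) (W.darts.get (nxt i)) :=
        ⟨i, (Dart.symm_symm _).symm, rfl⟩
      have hg := hg4 ((W.darts.get i).symm).toProd.1 _ _ hR rfl
      exact hg
end

section
/- Let G be a finite 3-regular simple graph with an edge u1u2, and let H be a finite connected simple graph, vertex-disjoint from G, having exactly two vertices v1 ≠ v2 of degree 2 and all other vertices of degree 3 (an edge gadget). Let J be the graph on the disjoint union of V(G) and V(H) whose edges are those of G except u1u2, those of H, and the two new edges u1v1 and u2v2 (the bisection of u1u2 by H). Then J is 3-regular; moreover, if G is 2-connected and the cubic completion H⁺ (the graph H together with the additional edge v1v2) is 2-connected, then J is 2-connected. -/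
open SimpleGraph

/-- `G` is `k`-connected: it has more than `k` vertices and deleting any set of fewer than
`k` vertices leaves a connected graph. -/
def KConnected (k : ℕ) {V : Type*} (G : SimpleGraph V) : Prop :=
  k < Nat.card V ∧ ∀ s : Set V, s.ncard < k → (G.induce sᶜ).Connected

/-- The graph `J` obtained by bisecting the edge `u₁u₂` of `G` with the edge gadget `H`:
vertices are those of `G` together with those of `H`; edges are those of `G` except
`u₁u₂`, those of `H`, and the two new edges `u₁v₁` and `u₂v₂`. -/
def bisect {V V' : Type*} (G : SimpleGraph V) (H : SimpleGraph V')
    (u₁ u₂ : V) (v₁ v₂ : V') : SimpleGraph (V ⊕ V') :=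
  SimpleGraph.fromRel (fun x y =>
    (∃ a b : V, x = Sum.inl a ∧ y = Sum.inl b ∧ G.Adj a b ∧ s(a, b) ≠ s(u₁, u₂)) ∨
    (∃ a b : V', x = Sum.inr a ∧ y = Sum.inr b ∧ H.Adj a b) ∨
    (x = Sum.inl u₁ ∧ y = Sum.inr v₁) ∨ (x = Sum.inl u₂ ∧ y = Sum.inr v₂))

/-- The cubic completion `H⁺` of an edge gadget `H` with degree-2 vertices `v₁, v₂`:
`H` together with the additional edge `v₁v₂`. -/
def cubicCompletionEdge {V' : Type*} (H : SimpleGraph V') (v₁ v₂ : V') : SimpleGraph V' :=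
  SimpleGraph.fromEdgeSet (insert s(v₁, v₂) H.edgeSet)


section Aux
variable {V V' : Type*} {G : SimpleGraph V} {H : SimpleGraph V'} {u₁ u₂ : V} {v₁ v₂ : V'}

set_option linter.unnecessarySeqFocus false
set_option linter.unreachableTactic false
set_option linter.unusedTactic false
set_option linter.unusedVariables false

lemma adj_ll {a b : V} :
    (bisect G H u₁ u₂ v₁ v₂).Adj (Sum.inl a) (Sum.inl b) ↔ G.Adj a b ∧ s(a,b) ≠ s(u₁,u₂) := by
  simp only [bisect, fromRel_adj]
  constructor
  · rintro ⟨hne, h | h⟩ <;> simp_all [Sym2.eq_swap] <;> tauto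
  · rintro ⟨h1, h2⟩
    exact ⟨by simp [h1.ne], Or.inl (Or.inl ⟨a, b, rfl, rfl, h1, h2⟩)⟩

lemma adj_rr {a b : V'} :
    (bisect G H u₁ u₂ v₁ v₂).Adj (Sum.inr a) (Sum.inr b) ↔ H.Adj a b := by
  simp only [bisect, fromRel_adj]
  constructor
  · rintro ⟨hne, h | h⟩ <;> simp_all <;> tauto
  · intro h1
    exact ⟨by simp [h1.ne], Or.inl (Or.inr (Or.inl ⟨a, b, rfl, rfl, h1⟩))⟩

lemma adj_lr {a : V} {b : V'} :
    (bisect G H u₁ u₂ v₁ v₂).Adj (Sum.inl a) (Sum.inr b) ↔ (a = u₁ ∧ b = v₁) ∨ (a = u₂ ∧ b = v₂) := by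
  simp only [bisect, fromRel_adj]
  constructor
  · rintro ⟨hne, h | h⟩ <;> simp_all <;> tauto
  · rintro (⟨h1, h2⟩ | ⟨h1, h2⟩) <;> subst h1 <;> subst h2 <;>
      exact ⟨by simp, Or.inl (by tauto)⟩

lemma adj_rl {a : V'} {b : V} :
    (bisect G H u₁ u₂ v₁ v₂).Adj (Sum.inr a) (Sum.inl b) ↔ (b = u₁ ∧ a = v₁) ∨ (b = u₂ ∧ a = v₂) := by
  rw [adj_comm, adj_lr]

lemma sym2_ne {a b : V} (ha : a ≠ u₁ ∧ a ≠ u₂ ∨ b ≠ u₁ ∧ b ≠ u₂) : s(a,b) ≠ s(u₁,u₂) := by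
  intro h; rw [Sym2.eq_iff] at h
  rcases h with ⟨rfl, rfl⟩ | ⟨rfl, rfl⟩ <;> tauto

lemma nbhd_mid {a : V} (ha1 : a ≠ u₁) (ha2 : a ≠ u₂) :
    (bisect G H u₁ u₂ v₁ v₂).neighborSet (Sum.inl a) = Sum.inl '' G.neighborSet a := by
  ext x
  cases x with
  | inl c =>
    simp only [mem_neighborSet, adj_ll, Set.mem_image]
    constructor
    · rintro ⟨h, -⟩; exact ⟨c, h, rfl⟩
    · rintro ⟨c', h, hc⟩
      obtain rfl : c' = c := Sum.inl.injEq _ _ ▸ hc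
      exact ⟨h, sym2_ne (Or.inl ⟨ha1, ha2⟩)⟩
  | inr c =>
    simp only [mem_neighborSet, adj_lr, Set.mem_image]
    constructor
    · rintro (⟨rfl, rfl⟩ | ⟨rfl, rfl⟩) <;> simp_all
    · rintro ⟨c', h, hc⟩; simp at hc

lemma nbhd_u₁ (hne : u₁ ≠ u₂) :
    (bisect G H u₁ u₂ v₁ v₂).neighborSet (Sum.inl u₁)
      = Sum.inl '' (G.neighborSet u₁ \ {u₂}) ∪ {Sum.inr v₁} := by
  ext x
  cases x with
  | inl c =>
    simp only [mem_neighborSet, adj_ll, Set.mem_union, Set.mem_image, Set.mem_singleton_iff,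
      Set.mem_diff]
    constructor
    · rintro ⟨h, hs⟩
      refine Or.inl ⟨c, ⟨h, ?_⟩, rfl⟩
      rintro rfl; exact hs rfl
    · rintro (⟨c', ⟨h, hc2⟩, hc⟩ | h)
      · obtain rfl : c' = c := Sum.inl.injEq _ _ ▸ hc
        refine ⟨h, fun hs => ?_⟩
        rw [Sym2.eq_iff] at hs
        rcases hs with ⟨h1, h2⟩ | ⟨h1, h2⟩ <;> simp_all
      · simp at h
  | inr c =>
    simp only [mem_neighborSet, adj_lr, Set.mem_union, Set.mem_image, Set.mem_singleton_iff]
    constructor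
    · rintro (⟨-, rfl⟩ | ⟨h, rfl⟩)
      · simp
      · exact absurd h.symm (Ne.symm hne)
    · rintro (⟨c', -, hc⟩ | h)
      · simp at hc
      · obtain rfl : c = v₁ := by simpa using h
        simp

lemma nbhd_u₂ (hne : u₁ ≠ u₂) :
    (bisect G H u₁ u₂ v₁ v₂).neighborSet (Sum.inl u₂)
      = Sum.inl '' (G.neighborSet u₂ \ {u₁}) ∪ {Sum.inr v₂} := by
  ext x
  cases x with
  | inl c =>
    simp only [mem_neighborSet, adj_ll, Set.mem_union, Set.mem_image, Set.mem_singleton_iff,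
      Set.mem_diff]
    constructor
    · rintro ⟨h, hs⟩
      refine Or.inl ⟨c, ⟨h, ?_⟩, rfl⟩
      rintro rfl; exact hs (by rw [Sym2.eq_swap])
    · rintro (⟨c', ⟨h, hc2⟩, hc⟩ | h)
      · obtain rfl : c' = c := Sum.inl.injEq _ _ ▸ hc
        refine ⟨h, fun hs => ?_⟩
        rw [Sym2.eq_iff] at hs
        rcases hs with ⟨h1, h2⟩ | ⟨h1, h2⟩ <;> simp_all
      · simp at h
  | inr c =>
    simp only [mem_neighborSet, adj_lr, Set.mem_union, Set.mem_image, Set.mem_singleton_iff]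
    constructor
    · rintro (⟨h, rfl⟩ | ⟨-, rfl⟩)
      · exact absurd h (Ne.symm hne)
      · simp
    · rintro (⟨c', -, hc⟩ | h)
      · simp at hc
      · obtain rfl : c = v₂ := by simpa using h
        simp

lemma nbhd_rmid {a : V'} (ha1 : a ≠ v₁) (ha2 : a ≠ v₂) :
    (bisect G H u₁ u₂ v₁ v₂).neighborSet (Sum.inr a) = Sum.inr '' H.neighborSet a := by
  ext x
  cases x with
  | inl c =>
    simp only [mem_neighborSet, adj_rl, Set.mem_image]
    constructor
    · rintro (⟨rfl, rfl⟩ | ⟨rfl, rfl⟩) <;> simp_all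
    · rintro ⟨c', h, hc⟩; simp at hc
  | inr c =>
    simp only [mem_neighborSet, adj_rr, Set.mem_image]
    constructor
    · intro h; exact ⟨c, h, rfl⟩
    · rintro ⟨c', h, hc⟩
      obtain rfl : c' = c := Sum.inr.injEq _ _ ▸ hc
      exact h

lemma nbhd_v₁ (hvadj : ¬ H.Adj v₁ v₂) (hv : v₁ ≠ v₂) :
    (bisect G H u₁ u₂ v₁ v₂).neighborSet (Sum.inr v₁)
      = Sum.inr '' H.neighborSet v₁ ∪ {Sum.inl u₁} := by
  ext x
  cases x with
  | inl c =>
    simp only [mem_neighborSet, adj_rl, Set.mem_union, Set.mem_image, Set.mem_singleton_iff]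
    constructor
    · rintro (⟨rfl, -⟩ | ⟨-, h⟩)
      · simp
      · exact absurd h.symm (Ne.symm hv)
    · rintro (⟨c', -, hc⟩ | h)
      · simp at hc
      · obtain rfl : c = u₁ := by simpa using h
        simp
  | inr c =>
    simp only [mem_neighborSet, adj_rr, Set.mem_union, Set.mem_image, Set.mem_singleton_iff]
    constructor
    · intro h; exact Or.inl ⟨c, h, rfl⟩
    · rintro (⟨c', h, hc⟩ | h)
      · obtain rfl : c' = c := Sum.inr.injEq _ _ ▸ hc
        exact h
      · simp at h

lemma nbhd_v₂ (hvadj : ¬ H.Adj v₁ v₂) (hv : v₁ ≠ v₂) :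
    (bisect G H u₁ u₂ v₁ v₂).neighborSet (Sum.inr v₂)
      = Sum.inr '' H.neighborSet v₂ ∪ {Sum.inl u₂} := by
  ext x
  cases x with
  | inl c =>
    simp only [mem_neighborSet, adj_rl, Set.mem_union, Set.mem_image, Set.mem_singleton_iff]
    constructor
    · rintro (⟨-, h⟩ | ⟨rfl, -⟩)
      · exact absurd h (Ne.symm hv)
      · simp
    · rintro (⟨c', -, hc⟩ | h)
      · simp at hc
      · obtain rfl : c = u₂ := by simpa using h
        simp
  | inr c =>
    simp only [mem_neighborSet, adj_rr, Set.mem_union, Set.mem_image, Set.mem_singleton_iff]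
    constructor
    · intro h; exact Or.inl ⟨c, h, rfl⟩
    · rintro (⟨c', h, hc⟩ | h)
      · obtain rfl : c' = c := Sum.inr.injEq _ _ ▸ hc
        exact h
      · simp at h

lemma sym2_ne₁ {a b : V} (ha : a ≠ u₁) (hb : b ≠ u₁) : s(a,b) ≠ s(u₁,u₂) := by
  intro h; rw [Sym2.eq_iff] at h
  rcases h with ⟨rfl, rfl⟩ | ⟨rfl, rfl⟩ <;> tauto

lemma sym2_ne₂ {a b : V} (ha : a ≠ u₂) (hb : b ≠ u₂) : s(a,b) ≠ s(u₁,u₂) := by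
  intro h; rw [Sym2.eq_iff] at h
  rcases h with ⟨rfl, rfl⟩ | ⟨rfl, rfl⟩ <;> tauto

lemma adj_plus (hv : v₁ ≠ v₂) {x y : V'} :
    (cubicCompletionEdge H v₁ v₂).Adj x y ↔ s(x,y) = s(v₁,v₂) ∨ H.Adj x y := by
  simp only [cubicCompletionEdge, SimpleGraph.fromEdgeSet_adj, Set.mem_insert_iff,
    SimpleGraph.mem_edgeSet]
  constructor
  · rintro ⟨h, -⟩; exact h
  · rintro (h | h)
    · refine ⟨Or.inl h, ?_⟩
      rw [Sym2.eq_iff] at h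
      rintro rfl
      rcases h with ⟨rfl, rfl⟩ | ⟨rfl, rfl⟩ <;> exact hv rfl
    · exact ⟨Or.inr h, h.ne⟩

lemma reach_of_walk {α β : Type*} {A : SimpleGraph α} {B : SimpleGraph β}
    (f : α → β) (hub : β)
    (h : ∀ x y : α, A.Adj x y → B.Adj (f x) (f y) ∨
      (B.Reachable (f x) hub ∧ B.Reachable (f y) hub))
    {c d : α} (p : A.Walk c d) (hd : B.Reachable (f d) hub) : B.Reachable (f c) hub := by
  induction p with
  | nil => exact hd
  | cons ha p ih =>
    rcases h _ _ ha with hb | ⟨h1, -⟩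
    · exact hb.reachable.trans (ih hd)
    · exact h1

lemma exists_mem_ne {α : Type*} {s : Set α} (h : 2 ≤ s.ncard) (a : α) : ∃ z ∈ s, z ≠ a := by
  by_contra hc
  push_neg at hc
  have hs : s ⊆ {a} := fun z hz => hc z hz
  have := Set.ncard_le_ncard hs (Set.finite_singleton a)
  simp [Set.ncard_singleton] at this
  omega

lemma conn_del [Fintype V] [Fintype V'] [DecidableEq V] [DecidableEq V']
    (hG3 : ∀ v : V, (G.neighborSet v).ncard = 3)
    (hu : G.Adj u₁ u₂) (hHconn : H.Connected) (hv : v₁ ≠ v₂)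
    (hHdeg : ∀ x : V', (H.neighborSet x).ncard = if x = v₁ ∨ x = v₂ then 2 else 3)
    (hKG : KConnected 2 G) (hKH : KConnected 2 (cubicCompletionEdge H v₁ v₂))
    (t : Set (V ⊕ V')) (w : V ⊕ V') (ht : t ⊆ {w}) :
    ((bisect G H u₁ u₂ v₁ v₂).induce tᶜ).Connected := by
  classical
  set J := bisect G H u₁ u₂ v₁ v₂ with hJ
  have mem : ∀ x : V ⊕ V', x ≠ w → x ∈ tᶜ := fun x hx hxt => hx (ht hxt)
  have hone : ∀ x : V ⊕ V', ({x} : Set (V ⊕ V')).ncard < 2 := by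
    intro x; simp [Set.ncard_singleton]
  have honeV : ∀ x : V, ({x} : Set V).ncard < 2 := by
    intro x; simp [Set.ncard_singleton]
  have honeV' : ∀ x : V', ({x} : Set V').ncard < 2 := by
    intro x; simp [Set.ncard_singleton]
  -- main goal: everything reachable to a hub
  suffices hsuf : ∃ hub : ↥tᶜ, ∀ (x : V ⊕ V') (hx : x ∈ tᶜ),
      (J.induce tᶜ).Reachable ⟨x, hx⟩ hub by
    obtain ⟨hub, hreach⟩ := hsuf
    rw [SimpleGraph.connected_iff]
    exact ⟨fun x y => (hreach x.1 x.2).trans (hreach y.1 y.2).symm, ⟨hub⟩⟩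
  cases w with
  | inl a =>
    have memr : ∀ b : V', Sum.inr b ∈ tᶜ := fun b => mem _ (by simp)
    refine ⟨⟨Sum.inr v₁, memr v₁⟩, ?_⟩
    -- every inr vertex reaches the hub via H
    have Hreach : ∀ (b : V') (hb : Sum.inr b ∈ tᶜ),
        (J.induce tᶜ).Reachable ⟨Sum.inr b, hb⟩ ⟨Sum.inr v₁, memr v₁⟩ := by
      intro b hb
      have hr := hHconn.preconnected b v₁
      refine hr.elim fun p => ?_
      exact reach_of_walk (B := J.induce tᶜ) (fun x : V' => ⟨Sum.inr x, memr x⟩)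
        ⟨Sum.inr v₁, memr v₁⟩
        (fun x y hxy => Or.inl (adj_rr.mpr hxy)) p (SimpleGraph.Reachable.refl _)
    by_cases ha1 : u₁ = a
    · subst ha1
      have key : ∀ (c : V) (hc : c ≠ u₁) (h : Sum.inl c ∈ tᶜ),
          (J.induce tᶜ).Reachable ⟨Sum.inl c, h⟩ ⟨Sum.inr v₁, memr v₁⟩ := by
        intro c hc h
        have hconn := (hKG.2 {u₁} (honeV u₁)).preconnected
        have hr := hconn ⟨c, by simpa using hc⟩ ⟨u₂, by simpa using hu.ne'⟩
        refine hr.elim fun p => ?_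
        refine reach_of_walk (B := J.induce tᶜ)
          (fun x : ↥({u₁}ᶜ : Set V) => (⟨Sum.inl x.1, mem _ (by simp [Set.mem_compl_singleton_iff.mp x.2])⟩ : ↥tᶜ))
          ⟨Sum.inr v₁, memr v₁⟩ ?_ p ?_
        · intro x y hxy
          exact Or.inl (adj_ll.mpr ⟨hxy, sym2_ne₁ (Set.mem_compl_singleton_iff.mp x.2) (Set.mem_compl_singleton_iff.mp y.2)⟩)
        · -- from inl u₂ : adjacent to inr v₂ then Hreach
          have h1 : (J.induce tᶜ).Adj ⟨Sum.inl u₂, mem _ (by simp [hu.ne'])⟩ ⟨Sum.inr v₂, memr v₂⟩ :=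
            adj_lr.mpr (Or.inr ⟨rfl, rfl⟩)
          exact h1.reachable.trans (Hreach v₂ (memr v₂))
      intro x hx
      cases x with
      | inl c =>
        by_cases hc : u₁ = c
        · subst hc
          exact (SimpleGraph.Adj.reachable (adj_lr.mpr (Or.inl ⟨rfl, rfl⟩)))
        · exact key c (Ne.symm hc) hx
      | inr b => exact Hreach b hx
    · by_cases ha2 : u₂ = a
      · subst ha2
        have key : ∀ (c : V) (hc : c ≠ u₂) (h : Sum.inl c ∈ tᶜ),
            (J.induce tᶜ).Reachable ⟨Sum.inl c, h⟩ ⟨Sum.inr v₁, memr v₁⟩ := by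
          intro c hc h
          have hconn := (hKG.2 {u₂} (honeV u₂)).preconnected
          have hr := hconn ⟨c, by simpa using hc⟩ ⟨u₁, by simpa using hu.ne⟩
          refine hr.elim fun p => ?_
          refine reach_of_walk (B := J.induce tᶜ)
            (fun x : ↥({u₂}ᶜ : Set V) => (⟨Sum.inl x.1, mem _ (by simp [Set.mem_compl_singleton_iff.mp x.2])⟩ : ↥tᶜ))
            ⟨Sum.inr v₁, memr v₁⟩ ?_ p ?_
          · intro x y hxy
            exact Or.inl (adj_ll.mpr ⟨hxy, sym2_ne₂ (Set.mem_compl_singleton_iff.mp x.2) (Set.mem_compl_singleton_iff.mp y.2)⟩)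
          · exact (SimpleGraph.Adj.reachable (adj_lr.mpr (Or.inl ⟨rfl, rfl⟩)))
        intro x hx
        cases x with
        | inl c =>
          by_cases hc : u₂ = c
          · subst hc
            have h1 : (J.induce tᶜ).Adj ⟨Sum.inl u₂, hx⟩ ⟨Sum.inr v₂, memr v₂⟩ :=
              adj_lr.mpr (Or.inr ⟨rfl, rfl⟩)
            exact h1.reachable.trans (Hreach v₂ (memr v₂))
          · exact key c (Ne.symm hc) hx
        | inr b => exact Hreach b hx
      · -- a is neither u₁ nor u₂
        have hRu₁ : ∀ (c : V), u₁ = c → ∀ (h : Sum.inl c ∈ tᶜ),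
            (J.induce tᶜ).Reachable ⟨Sum.inl c, h⟩ ⟨Sum.inr v₁, memr v₁⟩ := by
          rintro c rfl h
          exact SimpleGraph.Adj.reachable (adj_lr.mpr (Or.inl ⟨rfl, rfl⟩))
        have hRu₂ : ∀ (c : V), u₂ = c → ∀ (h : Sum.inl c ∈ tᶜ),
            (J.induce tᶜ).Reachable ⟨Sum.inl c, h⟩ ⟨Sum.inr v₁, memr v₁⟩ := by
          rintro c rfl h
          have h1 : (J.induce tᶜ).Adj ⟨Sum.inl u₂, h⟩ ⟨Sum.inr v₂, memr v₂⟩ :=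
            adj_lr.mpr (Or.inr ⟨rfl, rfl⟩)
          exact h1.reachable.trans (Hreach v₂ (memr v₂))
        have key : ∀ (c : V) (hc : c ≠ a) (h : Sum.inl c ∈ tᶜ),
            (J.induce tᶜ).Reachable ⟨Sum.inl c, h⟩ ⟨Sum.inr v₁, memr v₁⟩ := by
          intro c hc h
          have hconn := (hKG.2 {a} (honeV a)).preconnected
          have hr := hconn ⟨c, by simpa using hc⟩ ⟨u₁, by simpa using ha1⟩
          refine hr.elim fun p => ?_
          refine reach_of_walk (B := J.induce tᶜ)
            (fun x : ↥({a}ᶜ : Set V) => (⟨Sum.inl x.1, mem _ (by simp [Set.mem_compl_singleton_iff.mp x.2])⟩ : ↥tᶜ))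
            ⟨Sum.inr v₁, memr v₁⟩ ?_ p (hRu₁ u₁ rfl _)
          intro x y hxy
          by_cases hs : s(x.1, y.1) = s(u₁, u₂)
          · rw [Sym2.eq_iff] at hs
            rcases hs with ⟨hx1, hy1⟩ | ⟨hx1, hy1⟩
            · exact Or.inr ⟨hRu₁ _ hx1.symm _, hRu₂ _ hy1.symm _⟩
            · exact Or.inr ⟨hRu₂ _ hx1.symm _, hRu₁ _ hy1.symm _⟩
          · exact Or.inl (adj_ll.mpr ⟨hxy, hs⟩)
        intro x hx
        cases x with
        | inl c =>
          by_cases hc : a = c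
          · subst hc
            obtain ⟨z, hz⟩ : (G.neighborSet a).Nonempty :=
              Set.nonempty_of_ncard_ne_zero (by rw [hG3]; omega)
            have hzc : z ≠ a := fun hzz => G.irrefl (hzz ▸ hz)
            have h1 : (J.induce tᶜ).Adj ⟨Sum.inl a, hx⟩ ⟨Sum.inl z, mem _ (by simp [hzc])⟩ := by
              refine adj_ll.mpr ⟨hz, fun hs => ?_⟩
              rw [Sym2.eq_iff] at hs
              rcases hs with ⟨h1, -⟩ | ⟨h1, -⟩
              · exact ha1 h1.symm
              · exact ha2 h1.symm
            exact h1.reachable.trans (key z hzc _)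
          · exact key c (Ne.symm hc) hx
        | inr b => exact Hreach b hx
  | inr b =>
    have meml : ∀ c : V, Sum.inl c ∈ tᶜ := fun c => mem _ (by simp)
    refine ⟨⟨Sum.inl u₁, meml u₁⟩, ?_⟩
    -- all inl vertices reach the hub via G minus the edge u₁u₂
    have key0 : ∀ (c : V) (hc : c ≠ u₂),
        (J.induce tᶜ).Reachable ⟨Sum.inl c, meml c⟩ ⟨Sum.inl u₁, meml u₁⟩ := by
      intro c hc
      have hconn := (hKG.2 {u₂} (honeV u₂)).preconnected
      have hr := hconn ⟨c, by simpa using hc⟩ ⟨u₁, by simpa using hu.ne⟩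
      refine hr.elim fun p => ?_
      refine reach_of_walk (B := J.induce tᶜ)
        (fun x : ↥({u₂}ᶜ : Set V) => (⟨Sum.inl x.1, meml x.1⟩ : ↥tᶜ))
        ⟨Sum.inl u₁, meml u₁⟩ ?_ p (SimpleGraph.Reachable.refl _)
      intro x y hxy
      exact Or.inl (adj_ll.mpr ⟨hxy, sym2_ne₂ (Set.mem_compl_singleton_iff.mp x.2) (Set.mem_compl_singleton_iff.mp y.2)⟩)
    have Lreach : ∀ (c : V) (hc : Sum.inl c ∈ tᶜ),
        (J.induce tᶜ).Reachable ⟨Sum.inl c, hc⟩ ⟨Sum.inl u₁, meml u₁⟩ := by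
      intro c hc
      by_cases hcu : u₂ = c
      · subst hcu
        obtain ⟨z, hz, hzu⟩ : ∃ z ∈ G.neighborSet u₂, z ≠ u₁ :=
          exists_mem_ne (by rw [hG3]; omega) u₁
        have hzc : z ≠ u₂ := fun hzz => G.irrefl (hzz ▸ hz)
        have h1 : (J.induce tᶜ).Adj ⟨Sum.inl u₂, hc⟩ ⟨Sum.inl z, meml z⟩ := by
          refine adj_ll.mpr ⟨hz, ?_⟩
          intro hs; rw [Sym2.eq_iff] at hs
          rcases hs with ⟨h1, h2⟩ | ⟨h1, h2⟩
          · exact hzc h2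
          · exact hzu h2
        exact h1.reachable.trans (key0 z hzc)
      · exact key0 c (Ne.symm hcu)
    have Rv₁ : ∀ (c : V'), v₁ = c → ∀ (h : Sum.inr c ∈ tᶜ),
        (J.induce tᶜ).Reachable ⟨Sum.inr c, h⟩ ⟨Sum.inl u₁, meml u₁⟩ := by
      rintro c rfl h
      exact SimpleGraph.Adj.reachable (adj_rl.mpr (Or.inl ⟨rfl, rfl⟩))
    have Rv₂ : ∀ (c : V'), v₂ = c → ∀ (h : Sum.inr c ∈ tᶜ),
        (J.induce tᶜ).Reachable ⟨Sum.inr c, h⟩ ⟨Sum.inl u₁, meml u₁⟩ := by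
      rintro c rfl h
      have h1 : (J.induce tᶜ).Adj ⟨Sum.inr v₂, h⟩ ⟨Sum.inl u₂, meml u₂⟩ :=
        adj_rl.mpr (Or.inr ⟨rfl, rfl⟩)
      exact h1.reachable.trans (Lreach u₂ _)
    set Hp := cubicCompletionEdge H v₁ v₂ with hHp
    by_cases hb1 : v₁ = b
    · subst hb1
      have key : ∀ (c : V') (hc : c ≠ v₁) (h : Sum.inr c ∈ tᶜ),
          (J.induce tᶜ).Reachable ⟨Sum.inr c, h⟩ ⟨Sum.inl u₁, meml u₁⟩ := by
        intro c hc h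
        have hconn := (hKH.2 {v₁} (honeV' v₁)).preconnected
        have hr := hconn ⟨c, by simpa using hc⟩ ⟨v₂, by simpa using Ne.symm hv⟩
        refine hr.elim fun p => ?_
        refine reach_of_walk (B := J.induce tᶜ)
          (fun x : ↥({v₁}ᶜ : Set V') => (⟨Sum.inr x.1, mem _ (by simp [Set.mem_compl_singleton_iff.mp x.2])⟩ : ↥tᶜ))
          ⟨Sum.inl u₁, meml u₁⟩ ?_ p (Rv₂ v₂ rfl _)
        intro x y hxy
        rcases (adj_plus hv).mp hxy with hs | hs
        · rw [Sym2.eq_iff] at hs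
          exfalso
          rcases hs with ⟨h1, -⟩ | ⟨-, h2⟩
          · exact (Set.mem_compl_singleton_iff.mp x.2) h1
          · exact (Set.mem_compl_singleton_iff.mp y.2) h2
        · exact Or.inl (adj_rr.mpr hs)
      intro x hx
      cases x with
      | inl c => exact Lreach c hx
      | inr c =>
        by_cases hc : v₁ = c
        · subst hc; exact Rv₁ v₁ rfl hx
        · exact key c (Ne.symm hc) hx
    · by_cases hb2 : v₂ = b
      · subst hb2
        have key : ∀ (c : V') (hc : c ≠ v₂) (h : Sum.inr c ∈ tᶜ),
            (J.induce tᶜ).Reachable ⟨Sum.inr c, h⟩ ⟨Sum.inl u₁, meml u₁⟩ := by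
          intro c hc h
          have hconn := (hKH.2 {v₂} (honeV' v₂)).preconnected
          have hr := hconn ⟨c, by simpa using hc⟩ ⟨v₁, by simpa using hv⟩
          refine hr.elim fun p => ?_
          refine reach_of_walk (B := J.induce tᶜ)
            (fun x : ↥({v₂}ᶜ : Set V') => (⟨Sum.inr x.1, mem _ (by simp [Set.mem_compl_singleton_iff.mp x.2])⟩ : ↥tᶜ))
            ⟨Sum.inl u₁, meml u₁⟩ ?_ p (Rv₁ v₁ rfl _)
          intro x y hxy
          rcases (adj_plus hv).mp hxy with hs | hs
          · rw [Sym2.eq_iff] at hs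
            exfalso
            rcases hs with ⟨-, h2⟩ | ⟨h1, -⟩
            · exact (Set.mem_compl_singleton_iff.mp y.2) h2
            · exact (Set.mem_compl_singleton_iff.mp x.2) h1
          · exact Or.inl (adj_rr.mpr hs)
        intro x hx
        cases x with
        | inl c => exact Lreach c hx
        | inr c =>
          by_cases hc : v₂ = c
          · subst hc; exact Rv₂ v₂ rfl hx
          · exact key c (Ne.symm hc) hx
      · -- b neither v₁ nor v₂
        have key : ∀ (c : V') (hc : c ≠ b) (h : Sum.inr c ∈ tᶜ),
            (J.induce tᶜ).Reachable ⟨Sum.inr c, h⟩ ⟨Sum.inl u₁, meml u₁⟩ := by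
          intro c hc h
          have hconn := (hKH.2 {b} (honeV' b)).preconnected
          have hr := hconn ⟨c, by simpa using hc⟩ ⟨v₁, by simpa using hb1⟩
          refine hr.elim fun p => ?_
          refine reach_of_walk (B := J.induce tᶜ)
            (fun x : ↥({b}ᶜ : Set V') => (⟨Sum.inr x.1, mem _ (by simp [Set.mem_compl_singleton_iff.mp x.2])⟩ : ↥tᶜ))
            ⟨Sum.inl u₁, meml u₁⟩ ?_ p (Rv₁ v₁ rfl _)
          intro x y hxy
          rcases (adj_plus hv).mp hxy with hs | hs
          · rw [Sym2.eq_iff] at hs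
            rcases hs with ⟨hx1, hy1⟩ | ⟨hx1, hy1⟩
            · exact Or.inr ⟨Rv₁ _ hx1.symm _, Rv₂ _ hy1.symm _⟩
            · exact Or.inr ⟨Rv₂ _ hx1.symm _, Rv₁ _ hy1.symm _⟩
          · exact Or.inl (adj_rr.mpr hs)
        intro x hx
        cases x with
        | inl c => exact Lreach c hx
        | inr c =>
          by_cases hc : b = c
          · subst hc
            obtain ⟨z, hz⟩ : (H.neighborSet b).Nonempty := by
              refine Set.nonempty_of_ncard_ne_zero ?_
              rw [hHdeg]
              split <;> omega
            have hzc : z ≠ b := fun hzz => H.irrefl (hzz ▸ hz)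
            have h1 : (J.induce tᶜ).Adj ⟨Sum.inr b, hx⟩ ⟨Sum.inr z, mem _ (by simp [hzc])⟩ :=
              adj_rr.mpr hz
            exact h1.reachable.trans (key z hzc _)
          · exact key c (Ne.symm hc) hx


end Aux

/-- Bisecting an edge `u₁u₂` of a finite 3-regular simple graph `G` with an edge gadget `H`
(a finite connected simple graph with exactly two vertices `v₁ ≠ v₂` of degree 2, assumed
nonadjacent, and all other vertices of degree 3) produces a 3-regular graph `J`; moreover, if
`G` and the cubic completion `H⁺` are 2-connected then so is `J`. -/
theorem bisect_cubic_and_two_connected {V V' : Type*} [Fintype V] [Fintype V']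
    [DecidableEq V] [DecidableEq V']
    (G : SimpleGraph V) (H : SimpleGraph V') (u₁ u₂ : V) (v₁ v₂ : V')
    (hG3 : ∀ v : V, (G.neighborSet v).ncard = 3)
    (hu : G.Adj u₁ u₂)
    (hHconn : H.Connected) (hv : v₁ ≠ v₂) (hvadj : ¬ H.Adj v₁ v₂)
    (hHdeg : ∀ x : V', (H.neighborSet x).ncard = if x = v₁ ∨ x = v₂ then 2 else 3) :
    (∀ x : V ⊕ V', ((bisect G H u₁ u₂ v₁ v₂).neighborSet x).ncard = 3) ∧
    (KConnected 2 G → KConnected 2 (cubicCompletionEdge H v₁ v₂) →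
      KConnected 2 (bisect G H u₁ u₂ v₁ v₂)) := by
  constructor
  · -- 3-regularity
    intro x
    cases x with
    | inl a =>
      by_cases h1 : u₁ = a
      · subst h1
        rw [nbhd_u₁ hu.ne, Set.ncard_union_eq (by simp) (Set.toFinite _) (Set.toFinite _),
          Set.ncard_image_of_injective _ Sum.inl_injective,
          Set.ncard_diff_singleton_of_mem ((G.mem_neighborSet u₁ u₂).mpr hu), hG3,
          Set.ncard_singleton]
      · by_cases h2 : u₂ = a
        · subst h2
          rw [nbhd_u₂ hu.ne, Set.ncard_union_eq (by simp) (Set.toFinite _) (Set.toFinite _),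
            Set.ncard_image_of_injective _ Sum.inl_injective,
            Set.ncard_diff_singleton_of_mem ((G.mem_neighborSet u₂ u₁).mpr hu.symm), hG3,
            Set.ncard_singleton]
        · rw [nbhd_mid (Ne.symm h1) (Ne.symm h2),
            Set.ncard_image_of_injective _ Sum.inl_injective, hG3]
    | inr b =>
      by_cases h1 : v₁ = b
      · subst h1
        rw [nbhd_v₁ hvadj hv, Set.ncard_union_eq (by simp) (Set.toFinite _) (Set.toFinite _),
          Set.ncard_image_of_injective _ Sum.inr_injective, Set.ncard_singleton, hHdeg,
          if_pos (Or.inl rfl)]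
      · by_cases h2 : v₂ = b
        · subst h2
          rw [nbhd_v₂ hvadj hv, Set.ncard_union_eq (by simp) (Set.toFinite _) (Set.toFinite _),
            Set.ncard_image_of_injective _ Sum.inr_injective, Set.ncard_singleton, hHdeg,
            if_pos (Or.inr rfl)]
        · rw [nbhd_rmid (Ne.symm h1) (Ne.symm h2),
            Set.ncard_image_of_injective _ Sum.inr_injective, hHdeg,
            if_neg (by rintro (rfl | rfl) <;> simp_all)]
  · -- 2-connectivity
    intro hKG hKH
    constructor
    · have h1 := hKG.1
      rw [Nat.card_sum]
      omega
    · intro s hs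
      obtain ⟨w, hw⟩ : ∃ w, s ⊆ {w} := by
        rcases s.eq_empty_or_nonempty with rfl | ⟨z, hz⟩
        · exact ⟨Sum.inl u₁, by simp⟩
        · refine ⟨z, fun y hy => ?_⟩
          by_contra hne
          have h2 : 1 < s.ncard :=
            (Set.one_lt_ncard_iff (Set.toFinite s)).mpr ⟨y, z, hy, hz, by simpa using hne⟩
          omega
      exact conn_del hG3 hu hHconn hv hHdeg hKG hKH s w hw
end
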